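/- arXiv:1810.10430 — 5 statements merged into one kernel-verified Lean document; each statement's English description precedes it below -/
import Mathlib

section
/- Let G be a finite graph on p ≥ 3 vertices with κ(G) ≥ α(G). Then G is connected and the diameter of G does not exceed ⌊√(2p−3)⌋. -/
open SimpleGraph

/-- `Mball G r u` is the set of vertices at distance at most `r` from `u`
(the vertex set of the ball `G_r(u)`; the ball itself is `G.induce (Mball G r u)`). -/
def Mball {V : Type*} (G : SimpleGraph V) (r : ℕ) (u : V) : Set V := {v | G.edist u v ≤ r}

/-- `Nsphere G r u` is the set of vertices at distance exactly `r` from `u`. -/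
def Nsphere {V : Type*} (G : SimpleGraph V) (r : ℕ) (u : V) : Set V := {v | G.edist u v = r}

/-- The degree of a vertex, as the cardinality of its neighborhood. -/
noncomputable def deg {V : Type*} (G : SimpleGraph V) (u : V) : ℕ := (G.neighborSet u).ncard

/-- The (vertex) connectivity of a graph: the smallest number of vertices whose removal
turns it into a disconnected or trivial (one-vertex) graph. -/
noncomputable def kappa {V : Type*} (G : SimpleGraph V) : ℕ :=
  sInf {n | ∃ s : Set V, s.Finite ∧ s.ncard = n ∧
    (¬ (G.induce sᶜ).Connected ∨ sᶜ.ncard = 1)}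

/-- The independence number of a graph: the maximum size of a set of
pairwise nonadjacent vertices. -/
noncomputable def alpha {V : Type*} (G : SimpleGraph V) : ℕ :=
  sSup {n | ∃ s : Set V, s.Finite ∧ s.ncard = n ∧ s.Pairwise (fun a b => ¬ G.Adj a b)}


section helpers
variable {V : Type*} (G : SimpleGraph V)

/-- prefix distance bound along a walk -/
lemma dist_getVert_le (hc : G.Connected) {x y : V} (w : G.Walk x y) (j : ℕ) :
    G.dist x (w.getVert j) ≤ j := by
  induction w generalizing j with
  | nil => simp [SimpleGraph.Walk.getVert_of_length_le, SimpleGraph.dist_self]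
  | @cons a c b h w' ih =>
      cases j with
      | zero => simp
      | succ j =>
          rw [SimpleGraph.Walk.getVert_cons_succ]
          calc G.dist a (w'.getVert j) ≤ G.dist a c + G.dist c (w'.getVert j) :=
                hc.dist_triangle
            _ ≤ 1 + j := by
                have := (SimpleGraph.dist_eq_one_iff_adj (G := G)).2 h
                exact Nat.add_le_add (le_of_eq this) (ih j)
            _ = j + 1 := Nat.add_comm _ _

/-- discrete intermediate value theorem along a walk -/
lemma walk_ivt (hc : G.Connected) (x : V) {a b : V} (w : G.Walk a b) (i : ℕ)
    (h1 : G.dist x a ≤ i) (h2 : i ≤ G.dist x b) :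
    ∃ v ∈ w.support, G.dist x v = i := by
  induction w with
  | nil => exact ⟨_, by simp, le_antisymm h1 h2⟩
  | @cons a c b h w' ih =>
      by_cases hci : G.dist x c ≤ i
      · obtain ⟨v, hv, hv2⟩ := ih hci h2
        exact ⟨v, by simp [hv], hv2⟩
      · push_neg at hci
        have hac : G.dist x c ≤ G.dist x a + 1 := by
          have h1' := (SimpleGraph.dist_eq_one_iff_adj (G := G)).2 h
          calc G.dist x c ≤ G.dist x a + G.dist a c := hc.dist_triangle
            _ = G.dist x a + 1 := by rw [h1']
        exact ⟨a, by simp, by omega⟩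

lemma alpha_ge [Fintype V] (s : Set V) (hs : s.Pairwise (fun a b => ¬ G.Adj a b)) :
    s.ncard ≤ alpha G := by
  apply le_csSup
  · refine ⟨Fintype.card V, ?_⟩
    rintro n ⟨t, ht, rfl, -⟩
    calc t.ncard ≤ (Set.univ : Set V).ncard :=
          Set.ncard_le_ncard (Set.subset_univ t) (Set.toFinite _)
      _ = Fintype.card V := by simp [Set.ncard_univ, Nat.card_eq_fintype_card]
  · exact ⟨s, s.toFinite, rfl, hs⟩

lemma kappa_le [Fintype V] (s : Set V) (hs : ¬ (G.induce sᶜ).Connected) :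
    kappa G ≤ s.ncard :=
  Nat.sInf_le ⟨s, s.toFinite, rfl, Or.inl hs⟩

end helpers
/-- A finite graph on `p ≥ 3` vertices with `κ(G) ≥ α(G)` is connected
and has diameter at most `⌊√(2p−3)⌋`. -/
theorem stmt_1 {V : Type*} [Fintype V] (G : SimpleGraph V) (p : ℕ)
    (hcard : Fintype.card V = p) (hp : 3 ≤ p)
    (h : alpha G ≤ kappa G) :
    G.Connected ∧ ∀ x y : V, G.dist x y ≤ Nat.sqrt (2 * p - 3) := by
  classical
  have hne : Nonempty V := by
    rw [← Fintype.card_pos_iff]; omega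
  -- Part 1: connectivity
  have hconn : G.Connected := by
    by_contra hcon
    have hk0 : kappa G = 0 := by
      have hnc : ¬ (G.induce (∅ : Set V)ᶜ).Connected := by
        rw [Set.compl_empty]
        intro hcc
        exact hcon ((induceUnivIso G).connected_iff.mp hcc)
      have := kappa_le G ∅ hnc
      simpa using this
    have hpre : ¬ G.Preconnected := fun hpre => hcon ⟨hpre⟩
    unfold SimpleGraph.Preconnected at hpre
    push_neg at hpre
    obtain ⟨a, b, hab⟩ := hpre
    have hne' : a ≠ b := by rintro rfl; exact hab (SimpleGraph.Reachable.refl a)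
    have hpw : ({a, b} : Set V).Pairwise (fun u v => ¬ G.Adj u v) := by
      intro u hu v hv huv
      simp only [Set.mem_insert_iff, Set.mem_singleton_iff] at hu hv
      rcases hu with rfl | rfl <;> rcases hv with rfl | rfl
      · exact absurd rfl huv
      · exact fun h' => hab h'.reachable
      · exact fun h' => hab h'.symm.reachable
      · exact absurd rfl huv
    have h2 : 2 ≤ alpha G := by
      have := alpha_ge G {a, b} hpw
      rwa [Set.ncard_pair hne'] at this
    omega
  refine ⟨hconn, fun x y => ?_⟩
  set d := G.dist x y with hd
  by_cases hd1 : d ≤ 1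
  · have : 1 ≤ Nat.sqrt (2 * p - 3) := by
      rw [Nat.le_sqrt]; omega
    omega
  push_neg at hd1
  obtain ⟨w, hw⟩ := (hconn x y).exists_walk_length_eq_dist
  -- distances along the geodesic
  have hgvd : ∀ j, j ≤ d → G.dist x (w.getVert j) = j := by
    intro j hj
    have h1 : G.dist x (w.getVert j) ≤ j := dist_getVert_le G hconn w j
    have hjj : d - (d - j) = j := by omega
    have h2 : G.dist y (w.getVert j) ≤ d - j := by
      have hrev := dist_getVert_le G hconn w.reverse (d - j)
      rwa [SimpleGraph.Walk.getVert_reverse, hw, hjj] at hrev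
    have h3 : d ≤ G.dist x (w.getVert j) + G.dist (w.getVert j) y := hconn.dist_triangle
    rw [SimpleGraph.dist_comm] at h2
    omega
  -- independent set of size d/2 + 1
  have hK : d / 2 + 1 ≤ kappa G := by
    set f : ℕ → V := fun k => w.getVert (2 * k) with hf
    have hinj : Set.InjOn f (Finset.range (d / 2 + 1)) := by
      intro k hk l hl hkl
      simp only [Finset.coe_range, Set.mem_Iio] at hk hl
      have hk' := hgvd (2 * k) (by omega)
      have hl' := hgvd (2 * l) (by omega)
      rw [hf] at hkl
      simp only at hkl
      rw [hkl] at hk'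
      omega
    set F : Finset V := (Finset.range (d / 2 + 1)).image f with hF
    have hFcard : F.card = d / 2 + 1 := by
      rw [hF, Finset.card_image_of_injOn hinj, Finset.card_range]
    have hpairF : (↑F : Set V).Pairwise (fun a b => ¬ G.Adj a b) := by
      intro a ha b hb hab hadj
      simp only [hF, Finset.coe_image, Finset.coe_range, Set.mem_image, Set.mem_Iio] at ha hb
      obtain ⟨k, hk, rfl⟩ := ha
      obtain ⟨l, hl, rfl⟩ := hb
      have hk' : G.dist x (f k) = 2 * k := hgvd (2 * k) (by omega)
      have hl' : G.dist x (f l) = 2 * l := hgvd (2 * l) (by omega)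
      have hone : G.dist (f k) (f l) = 1 := (SimpleGraph.dist_eq_one_iff_adj).2 hadj
      have t1 : G.dist x (f l) ≤ G.dist x (f k) + G.dist (f k) (f l) := hconn.dist_triangle
      have t2 : G.dist x (f k) ≤ G.dist x (f l) + G.dist (f l) (f k) := hconn.dist_triangle
      have hone2 : G.dist (f l) (f k) = 1 := (SimpleGraph.dist_eq_one_iff_adj).2 hadj.symm
      have hkl : k ≠ l := fun hh => hab (by rw [hh])
      omega
    have := alpha_ge G ↑F hpairF
    rw [Set.ncard_coe_finset, hFcard] at this
    omega
  -- sphere cut sets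
  set S : ℕ → Finset V := fun i => Finset.univ.filter (fun v => G.dist x v = i) with hS
  have hcut : ∀ i, 1 ≤ i → i ≤ d - 1 → kappa G ≤ (S i).card := by
    intro i hi1 hi2
    have hnc : ¬ (G.induce (↑(S i) : Set V)ᶜ).Connected := by
      intro hcc
      have hxm : x ∈ (↑(S i) : Set V)ᶜ := by
        simp [hS, SimpleGraph.dist_self]; omega
      have hym : y ∈ (↑(S i) : Set V)ᶜ := by
        simp [hS, ← hd]; omega
      obtain ⟨w'⟩ := hcc.preconnected ⟨x, hxm⟩ ⟨y, hym⟩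
      let φ : G.induce (↑(S i) : Set V)ᶜ →g G := ⟨Subtype.val, fun hh => hh⟩
      obtain ⟨v, hv, hvd⟩ := walk_ivt G hconn x (w'.map φ) i
        (by show G.dist x x ≤ i; simp [SimpleGraph.dist_self])
        (by show i ≤ G.dist x y; rw [← hd]; omega)
      rw [SimpleGraph.Walk.support_map] at hv
      obtain ⟨u, hu, rfl⟩ := List.mem_map.mp hv
      have hu2 := u.2
      simp [hS] at hu2
      exact hu2 hvd
    have := kappa_le G ↑(S i) hnc
    rwa [Set.ncard_coe_finset] at this
  -- counting
  have hsum : ∑ i ∈ Finset.range (d + 1), (S i).card ≤ p := by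
    rw [← Finset.card_biUnion]
    · calc ((Finset.range (d + 1)).biUnion S).card ≤ Finset.univ.card :=
          Finset.card_le_univ _
        _ = p := hcard
    · intro i _ j _ hij
      rw [Function.onFun, Finset.disjoint_left]
      intro v hv hv'
      simp [hS] at hv hv'
      omega
  have hsplit : Finset.range (d + 1) = insert 0 (insert d (Finset.Icc 1 (d - 1))) := by
    ext n; simp; omega
  have h0 : 1 ≤ (S 0).card :=
    Finset.card_pos.2 ⟨x, by simp [hS, SimpleGraph.dist_self]⟩
  have hdd : 1 ≤ (S d).card :=
    Finset.card_pos.2 ⟨y, by simp [hS, ← hd]⟩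
  have hIcc : (d - 1) * kappa G ≤ ∑ i ∈ Finset.Icc 1 (d - 1), (S i).card := by
    have hcc : (Finset.Icc 1 (d - 1)).card = d - 1 := by
      rw [Nat.card_Icc]; omega
    calc (d - 1) * kappa G = ∑ _i ∈ Finset.Icc 1 (d - 1), kappa G := by
          rw [Finset.sum_const, smul_eq_mul, hcc]
      _ ≤ _ := Finset.sum_le_sum fun i hi =>
          hcut i (Finset.mem_Icc.mp hi).1 (Finset.mem_Icc.mp hi).2
  have hsum2 : 2 + (d - 1) * kappa G ≤ p := by
    rw [hsplit, Finset.sum_insert (by simp; omega),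
      Finset.sum_insert (by simp; omega)] at hsum
    linarith
  -- final arithmetic
  have hsum3 : 2 + (d - 1) * (d / 2 + 1) ≤ p :=
    le_trans (Nat.add_le_add_left (Nat.mul_le_mul_left _ hK) 2) hsum2
  rw [Nat.le_sqrt]
  obtain ⟨e, he⟩ : ∃ e, d = e + 1 := ⟨d - 1, by omega⟩
  set q := d / 2 with hq
  have hq1 : d ≤ 2 * q + 1 := by omega
  have hq2 : e ≤ 2 * q := by omega
  have h6 : e * e ≤ e * (2 * q) := Nat.mul_le_mul_left _ hq2
  rw [he] at hsum3
  simp only [Nat.add_sub_cancel] at hsum3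
  have hfin : d * d + 3 ≤ 2 * p := by
    rw [he]; nlinarith [hsum3, h6]
  exact Nat.le_sub_of_add_le hfin
end

section
/- Let G be a connected finite balanced bipartite graph on at least four vertices such that d(u) + d(v) > 1 + |N_2(u) ∪ N(v)| for every pair of vertices u, v ∈ V(G) with d(u,v) = 3. Then for every path P in G there exists a cycle in G whose length is at least the length of P; that is, the length of any path of G does not exceed the length of a longest cycle of G. -/
open SimpleGraph

namespace Stmt12Aux

variable {V : Type*} {G : SimpleGraph V}

lemma support_eq_map_getVert {u v : V} (w : G.Walk u v) :
    w.support = (List.range (w.length + 1)).map w.getVert := by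
  induction w with
  | nil => simp [List.range_succ]
  | @cons a c b h p ih =>
    rw [Walk.support_cons, ih]
    conv_rhs => rw [show (Walk.cons h p).length + 1 = (p.length + 1) + 1 from rfl,
      List.range_succ_eq_map]
    rw [List.map_cons, List.map_map]
    congr 1

lemma getVert_injOn {u v : V} {w : G.Walk u v} (hw : w.IsPath) :
    ∀ (m n : ℕ), m ≤ w.length → n ≤ w.length → w.getVert m = w.getVert n → m = n := by
  intro m n hm hn h
  have hnd := hw.support_nodup
  rw [support_eq_map_getVert] at hnd
  exact List.inj_on_of_nodup_map hnd (by simpa using Nat.lt_succ_of_le hm)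
    (by simpa using Nat.lt_succ_of_le hn) h

/-- Segment of a walk from index `a` to `a+c`. -/
def seg {u v : V} (w : G.Walk u v) : (c a : ℕ) → (h : a + c ≤ w.length) →
    G.Walk (w.getVert a) (w.getVert (a + c))
  | 0, a, _ => Walk.nil.copy rfl (by rw [Nat.add_zero])
  | c+1, a, h =>
      Walk.cons (w.adj_getVert_succ (by omega))
        ((seg w c (a+1) (by omega)).copy rfl (by rw [show a+1+c = a+(c+1) by omega]))

@[simp] lemma length_seg {u v : V} (w : G.Walk u v) :
    ∀ (c a : ℕ) (h : a + c ≤ w.length), (seg w c a h).length = c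
  | 0, a, _ => by simp [seg]
  | c+1, a, h => by
      rw [seg, Walk.length_cons, Walk.length_copy, length_seg w c (a+1) (by omega)]

lemma support_seg {u v : V} (w : G.Walk u v) :
    ∀ (c a : ℕ) (h : a + c ≤ w.length),
      (seg w c a h).support = (List.range (c+1)).map (fun t => w.getVert (a+t))
  | 0, a, _ => by simp [seg, List.range_succ]
  | c+1, a, h => by
      rw [seg, Walk.support_cons, Walk.support_copy, support_seg w c (a+1) (by omega)]
      conv_rhs => rw [show c+1+1 = (c+1)+1 from rfl, List.range_succ_eq_map]
      rw [List.map_cons, List.map_map]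
      congr 1
      apply List.map_congr_left
      intro t _
      simp only [Function.comp]
      congr 1
      omega

lemma walk_parity {s : Set V} (hs : ∀ ⦃x y : V⦄, G.Adj x y → (x ∈ s ↔ y ∉ s))
    {a b : V} (w : G.Walk a b) : ((a ∈ s) ↔ (b ∈ s)) ↔ Even w.length := by
  induction w with
  | nil => simp
  | @cons a c b h p ih =>
    have := hs h
    rw [Walk.length_cons, Nat.even_add_one, ← ih]
    tauto

lemma getVert_parity {s : Set V} (hs : ∀ ⦃x y : V⦄, G.Adj x y → (x ∈ s ↔ y ∉ s))
    {u v : V} (w : G.Walk u v) {m : ℕ} (hm : m ≤ w.length) :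
    ((u ∈ s) ↔ (w.getVert m ∈ s)) ↔ Even m := by
  have h0 : (0:ℕ) + m ≤ w.length := by omega
  have := walk_parity hs ((seg w m 0 h0).copy w.getVert_zero
    (by rw [Nat.zero_add]))
  rwa [Walk.length_copy, length_seg] at this

lemma enat_eq_two {e : ℕ∞} (h2 : e ≤ 2) (h0 : e ≠ 0) (h1 : e ≠ 1) : e = 2 := by
  cases e using ENat.recTopCoe with
  | top => simp at h2
  | coe n =>
    have h2' : n ≤ 2 := by exact_mod_cast h2
    have h0' : n ≠ 0 := by exact_mod_cast h0
    have h1' : n ≠ 1 := by exact_mod_cast h1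
    have : n = 2 := by omega
    exact_mod_cast this

lemma edge_start {a b x : V} {p : G.Walk a b} (hp : p.IsPath) (he : s(x, a) ∈ p.edges) :
    x = p.getVert 1 := by
  induction p with
  | nil => simp at he
  | @cons a c b h q ih =>
    rw [Walk.edges_cons] at he
    rcases List.mem_cons.mp he with h1 | h2
    · rw [Sym2.eq_iff] at h1
      rcases h1 with ⟨hxa, hac⟩ | ⟨hxc, _⟩
      · exact absurd hac h.ne
      · simp [Walk.getVert_cons_succ, hxc, Walk.getVert_zero]
    · exfalso
      have : a ∈ q.support := Walk.fst_mem_support_of_mem_edges q (by rwa [Sym2.eq_swap] at h2)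
      exact ((Walk.cons_isPath_iff h q).mp hp).2 this

lemma dist_step (hconn : G.Connected) {a c : V} {n : ℕ} (h : G.dist a c = n + 1) :
    ∃ b, G.Adj a b ∧ G.dist b c = n := by
  obtain ⟨p, hp⟩ := hconn.exists_walk_length_eq_dist a c
  cases p with
  | nil => rw [h] at hp; simp at hp
  | @cons a b' c hadj q =>
    refine ⟨b', hadj, le_antisymm ?_ ?_⟩
    · have h1 : G.dist b' c ≤ q.length := SimpleGraph.dist_le q
      rw [Walk.length_cons] at hp
      omega
    · have ht := hconn.dist_triangle (u := a) (v := b') (w := c)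
      have h1 : G.dist a b' ≤ 1 := by
        have := SimpleGraph.dist_le (Walk.cons hadj Walk.nil)
        simpa using this
      omega

lemma edist_coe_of_dist (hconn : G.Connected) (a b : V) :
    G.edist a b = (G.dist a b : ℕ∞) := by
  rw [SimpleGraph.dist]
  exact (ENat.coe_toNat (by rw [edist_ne_top_iff_reachable]; exact hconn a b)).symm


lemma map_getVert_nodup {u v : V} {Q : G.Walk u v} (hQ : Q.IsPath) {L : List ℕ}
    (h1 : L.Nodup) (h2 : ∀ x ∈ L, x ≤ Q.length) : (L.map Q.getVert).Nodup :=
  h1.map_on (fun x hx y hy h => getVert_injOn hQ x y (h2 x hx) (h2 y hy) h)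

lemma support_mem_iff_of {a b c d : V} {R : G.Walk a b} {Q : G.Walk c d}
    (hR : R.IsPath) (hQ : Q.IsPath) (hsub : ∀ x ∈ R.support, x ∈ Q.support)
    (hlen : R.length = Q.length) : ∀ x, x ∈ R.support ↔ x ∈ Q.support := by
  classical
  have h1 : R.support.toFinset ⊆ Q.support.toFinset := by
    intro x hx
    rw [List.mem_toFinset] at *
    exact hsub x hx
  have e1 : R.support.toFinset.card = R.length + 1 := by
    rw [List.toFinset_card_of_nodup hR.support_nodup, Walk.length_support]
  have e2 : Q.support.toFinset.card = Q.length + 1 := by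
    rw [List.toFinset_card_of_nodup hQ.support_nodup, Walk.length_support]
  have heq := Finset.eq_of_subset_of_card_le h1 (by omega)
  intro x
  rw [← List.mem_toFinset, heq, List.mem_toFinset]

lemma nbr_mem_support {z t : V} {Q : G.Walk z t} (hQ : Q.IsPath)
    (hmax : ∀ (a b : V) (R : G.Walk a b), R.IsPath → R.length ≤ Q.length) :
    ∀ x, G.Adj z x → x ∈ Q.support := by
  intro x hx
  by_contra hxs
  have hpath : (Walk.cons hx.symm Q).IsPath := (Walk.cons_isPath_iff _ _).mpr ⟨hQ, hxs⟩
  have := hmax _ _ _ hpath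
  rw [Walk.length_cons] at this
  omega

lemma machinery [Fintype V] {s : Set V}
    (hs : ∀ ⦃x y : V⦄, G.Adj x y → (x ∈ s ↔ y ∉ s))
    (hdeg : ∀ u v : V, G.edist u v = 3 →
      1 + (Nsphere G 2 u ∪ G.neighborSet v).ncard < deg G u + deg G v)
    {z t w : V} (Q : G.Walk z t) (hQ : Q.IsPath)
    (hmax : ∀ (a b : V) (R : G.Walk a b), R.IsPath → R.length ≤ Q.length)
    (hw : G.edist z w = 3) :
    ∃ (z' : V) (Q' : G.Walk z' t), Q'.IsPath ∧ Q'.length = Q.length ∧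
      (∀ x, x ∈ Q'.support ↔ x ∈ Q.support) ∧ G.Adj z' w := by
  classical
  have nbr := nbr_mem_support hQ hmax
  -- degree of z at least 2
  have hdz : 2 ≤ deg G z := by
    have h1 := hdeg z w hw
    have h2 : (G.neighborSet w).ncard ≤ (Nsphere G 2 z ∪ G.neighborSet w).ncard :=
      Set.ncard_le_ncard Set.subset_union_right (Set.toFinite _)
    unfold deg at *
    omega
  have hk1 : 1 ≤ Q.length := by
    obtain ⟨x, hx⟩ : (G.neighborSet z).Nonempty := by
      rw [← Set.ncard_pos (Set.toFinite _)]
      unfold deg at hdz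
      omega
    have hxs := nbr x hx
    by_contra h0
    rw [support_eq_map_getVert, show Q.length + 1 = 1 by omega] at hxs
    simp [List.range_succ] at hxs
    exact G.loopless.irrefl z (hxs ▸ hx)
  have hpar : ∀ m ≤ Q.length, ((z ∈ s) ↔ (Q.getVert m ∈ s)) ↔ Even m :=
    fun m hm => getVert_parity hs Q hm
  -- the index set I
  set k := Q.length with hkdef
  let I : Finset ℕ := (Finset.range (k+1)).filter (fun m => G.Adj z (Q.getVert m) ∧ m ≠ 1)
  have hIodd : ∀ m ∈ I, ¬ Even m ∧ 3 ≤ m ∧ m ≤ k := by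
    intro m hm
    simp only [I, Finset.mem_filter, Finset.mem_range] at hm
    obtain ⟨hmr, hadj, hm1⟩ := hm
    have hnotE : ¬ Even m := by
      have h1 := hs hadj
      have h2 := hpar m (by omega)
      tauto
    refine ⟨hnotE, ?_, by omega⟩
    rcases Nat.not_even_iff_odd.mp hnotE with ⟨r, hr⟩
    omega
  have hinj := getVert_injOn hQ
  -- I.image getVert = N(z) \ {getVert 1}
  have himg : ↑(I.image Q.getVert) = G.neighborSet z \ {Q.getVert 1} := by
    ext x
    simp only [Finset.coe_image, Set.mem_image, Finset.mem_coe, Finset.mem_filter,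
      Finset.mem_range, I, Set.mem_diff, mem_neighborSet, Set.mem_singleton_iff]
    constructor
    · rintro ⟨m, ⟨hmr, hadj, hm1⟩, rfl⟩
      refine ⟨hadj, fun hx => hm1 (hinj m 1 (by omega) (by omega) hx)⟩
    · rintro ⟨hadj, hx1⟩
      obtain ⟨n, hn, hnk⟩ := Walk.mem_support_iff_exists_getVert.mp (nbr x hadj)
      exact ⟨n, ⟨by omega, by rw [hn]; exact hadj, fun h => hx1 (by rw [← hn, h])⟩, hn⟩
  have hy1 : G.Adj z (Q.getVert 1) := by
    have := Q.adj_getVert_succ (by omega : 0 < Q.length)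
    rwa [Q.getVert_zero] at this
  have hIcard : I.card = deg G z - 1 := by
    have h1 : (I.image Q.getVert).card = I.card := by
      apply Finset.card_image_of_injOn
      intro m hm n hn h
      have h1 := hIodd m hm
      have h2 := hIodd n hn
      exact hinj m n (by omega) (by omega) h
    have h2 : (↑(I.image Q.getVert) : Set V).ncard = deg G z - 1 := by
      have h3 : Q.getVert 1 ∈ G.neighborSet z := hy1
      have h4 := Set.ncard_diff_singleton_of_mem h3
      rw [himg, h4]
      rfl
    rw [Set.ncard_coe_finset] at h2
    omega
  -- predecessor image
  let PB : Finset V := I.image (fun m => Q.getVert (m-1))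
  have hPBcard : PB.card = I.card := by
    apply Finset.card_image_of_injOn
    intro m hm n hn h
    have h1 := hIodd m hm
    have h2 := hIodd n hn
    have := hinj (m-1) (n-1) (by omega) (by omega) h
    omega
  have hPBsub : ↑PB ⊆ Nsphere G 2 z := by
    intro x hx
    simp only [PB, Finset.coe_image, Set.mem_image, Finset.mem_coe] at hx
    obtain ⟨m, hm, rfl⟩ := hx
    obtain ⟨hodd, hm3, hmk⟩ := hIodd m hm
    simp only [I, Finset.mem_filter, Finset.mem_range] at hm
    obtain ⟨hmr, hadj, hm1⟩ := hm
    have hadjpred : G.Adj (Q.getVert m) (Q.getVert (m-1)) := by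
      have := Q.adj_getVert_succ (i := m - 1) (by omega)
      rw [show m - 1 + 1 = m by omega] at this
      exact this.symm
    have hle : G.edist z (Q.getVert (m-1)) ≤ 2 := by
      calc G.edist z (Q.getVert (m-1)) ≤ G.edist z (Q.getVert m) + G.edist (Q.getVert m) (Q.getVert (m-1)) :=
            SimpleGraph.edist_triangle
        _ ≤ 1 + 1 := by
            have e1 : G.edist z (Q.getVert m) = 1 := edist_eq_one_iff_adj.mpr hadj
            have e2 : G.edist (Q.getVert m) (Q.getVert (m-1)) = 1 :=
              edist_eq_one_iff_adj.mpr hadjpred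
            rw [e1, e2]
        _ = 2 := by norm_num
    have hne0 : G.edist z (Q.getVert (m-1)) ≠ 0 := by
      simp only [ne_eq, edist_eq_zero_iff]
      intro h
      have := hinj 0 (m-1) (by omega) (by omega) ((Q.getVert_zero).trans h)
      omega
    have hne1 : G.edist z (Q.getVert (m-1)) ≠ 1 := by
      simp only [ne_eq, edist_eq_one_iff_adj]
      intro hcon
      have h1 := hs hcon
      have h2 := (hpar (m-1) (by omega)).mpr (by
        rcases Nat.not_even_iff_odd.mp hodd with ⟨r, hr⟩
        exact ⟨r, by omega⟩)
      tauto
    have : G.edist z (Q.getVert (m-1)) = 2 := enat_eq_two hle hne0 hne1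
    simpa [Nsphere] using this
  -- find m ∈ I with w adjacent to the predecessor
  have hmain : ∃ m ∈ I, G.Adj w (Q.getVert (m-1)) := by
    by_contra hnone
    push_neg at hnone
    have hdisj : Disjoint (↑PB : Set V) (G.neighborSet w) := by
      rw [Set.disjoint_left]
      rintro x hx hxw
      simp only [PB, Finset.coe_image, Set.mem_image, Finset.mem_coe] at hx
      obtain ⟨m, hm, rfl⟩ := hx
      exact hnone m hm hxw
    have hsub : (↑PB : Set V) ∪ G.neighborSet w ⊆ Nsphere G 2 z ∪ G.neighborSet w :=
      Set.union_subset_union_left _ hPBsub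
    have h1 : ((↑PB : Set V) ∪ G.neighborSet w).ncard = PB.card + deg G w := by
      rw [Set.ncard_union_eq hdisj (Set.toFinite _) (Set.toFinite _), Set.ncard_coe_finset]
      rfl
    have h2 : ((↑PB : Set V) ∪ G.neighborSet w).ncard ≤ (Nsphere G 2 z ∪ G.neighborSet w).ncard :=
      Set.ncard_le_ncard hsub (Set.toFinite _)
    have h3 := hdeg z w hw
    omega
  obtain ⟨m, hmI, hwadj⟩ := hmain
  obtain ⟨hmodd, hm3, hmk⟩ := hIodd m hmI
  have hmem' := hmI
  simp only [I, Finset.mem_filter, Finset.mem_range] at hmem'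
  obtain ⟨-, hzadj, -⟩ := hmem'
  -- abbreviations for path pieces
  have hple : (0:ℕ) + (m-1) ≤ k := by omega
  have hple2 : m + (k - m) ≤ k := by omega
  let p1 : G.Walk z (Q.getVert (m-1)) :=
    (seg Q (m-1) 0 hple).copy Q.getVert_zero (congrArg Q.getVert (by omega))
  let p2 : G.Walk (Q.getVert m) t :=
    (seg Q (k-m) m hple2).copy rfl
      (by rw [show m + (k-m) = k by omega]; exact Q.getVert_length)
  by_cases hwsup : w ∈ Q.support
  case neg =>
    exfalso
    let R : G.Walk w t := Walk.cons hwadj (p1.reverse.append (Walk.cons hzadj p2))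
    have hsup : R.support = w :: (((List.range (m-1+1)).map (fun tt => Q.getVert (0+tt))).reverse
        ++ (List.range (k-m+1)).map (fun tt => Q.getVert (m+tt))) := by
      simp only [R, p1, p2, Walk.support_cons, Walk.support_append, Walk.support_reverse,
        Walk.support_copy, support_seg, List.tail_cons]
    have hndup : R.support.Nodup := by
      rw [hsup]
      refine List.nodup_cons.mpr ⟨?_, ?_⟩
      · intro hmem
        apply hwsup
        simp only [List.mem_append, List.mem_reverse, List.mem_map, List.mem_range] at hmem
        rcases hmem with ⟨tt, htt, rfl⟩ | ⟨tt, htt, rfl⟩ <;>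
          exact Walk.mem_support_iff_exists_getVert.mpr ⟨_, rfl, by omega⟩
      · rw [List.nodup_append]
        refine ⟨List.nodup_reverse.mpr (List.nodup_range.map_on (fun x hx y hy h => by
            simp only [List.mem_range] at hx hy
            have := hinj (0+x) (0+y) (by omega) (by omega) h
            omega)), List.nodup_range.map_on (fun x hx y hy h => by
            simp only [List.mem_range] at hx hy
            have := hinj (m+x) (m+y) (by omega) (by omega) h
            omega), ?_⟩
        rintro x hx1 _ hx2 rfl
        simp only [List.mem_reverse, List.mem_map, List.mem_range] at hx1 hx2
        obtain ⟨t1, ht1, rfl⟩ := hx1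
        obtain ⟨t2, ht2, heq⟩ := hx2
        have := hinj (m+t2) (0+t1) (by omega) (by omega) heq
        omega
    have hlen : R.length = k + 1 := by
      simp only [R, p1, p2, Walk.length_cons, Walk.length_append, Walk.length_reverse,
        Walk.length_copy, length_seg]
      omega
    have := hmax _ _ R (Walk.IsPath.mk' hndup)
    omega
  case pos =>
    obtain ⟨j, hjv, hjk⟩ := Walk.mem_support_iff_exists_getVert.mp hwsup
    have hjodd : ¬ Even j := by
      obtain ⟨W, hW⟩ := exists_walk_of_edist_eq_coe (k := 3) (by exact_mod_cast hw)
      have hp1 := walk_parity hs W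
      have hp2 := hpar j (by omega)
      rw [hW] at hp1
      rw [hjv] at hp2
      have h3 : ¬ Even (3:ℕ) := by decide
      tauto
    have hjm : j ≠ m := by
      intro h
      subst h
      have : G.edist z w = 1 := edist_eq_one_iff_adj.mpr (hjv ▸ hzadj)
      rw [hw] at this
      exact absurd this (by decide)
    have hji : j ≠ m - 1 := by
      intro h
      rw [h] at hjv
      rw [hjv] at hwadj
      exact G.loopless.irrefl w hwadj
    have hadj_ij : G.Adj (Q.getVert (m-1)) (Q.getVert j) := by
      rw [hjv]
      exact hwadj.symm
    rcases Nat.lt_or_ge j (m-1) with hcase | hcase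
    · -- j < m - 1 : new endpoint getVert (j+1)
      let q1 : G.Walk (Q.getVert (j+1)) (Q.getVert (m-1)) :=
        (seg Q ((m-1)-(j+1)) (j+1) (by omega)).copy rfl (congrArg Q.getVert (by omega))
      let q2 : G.Walk (Q.getVert j) z :=
        ((seg Q j 0 (by omega)).copy Q.getVert_zero (congrArg Q.getVert (by omega))).reverse
      let R : G.Walk (Q.getVert (j+1)) t :=
        q1.append (Walk.cons hadj_ij (q2.append (Walk.cons hzadj p2)))
      have hsup : R.support = (List.range ((m-1)-(j+1)+1)).map (fun tt => Q.getVert (j+1+tt))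
          ++ (((List.range (j+1)).map (fun tt => Q.getVert (0+tt))).reverse
          ++ (List.range (k-m+1)).map (fun tt => Q.getVert (m+tt))) := by
        simp only [R, q1, q2, p2, Walk.support_append, Walk.support_cons, Walk.support_reverse,
          Walk.support_copy, support_seg, List.tail_cons]
      have hndup : R.support.Nodup := by
        rw [hsup, List.nodup_append]
        refine ⟨List.nodup_range.map_on (fun x hx y hy h => by
            simp only [List.mem_range] at hx hy
            have := hinj (j+1+x) (j+1+y) (by omega) (by omega) h
            omega), ?_, ?_⟩
        · rw [List.nodup_append]
          refine ⟨List.nodup_reverse.mpr (List.nodup_range.map_on (fun x hx y hy h => by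
              simp only [List.mem_range] at hx hy
              have := hinj (0+x) (0+y) (by omega) (by omega) h
              omega)), List.nodup_range.map_on (fun x hx y hy h => by
              simp only [List.mem_range] at hx hy
              have := hinj (m+x) (m+y) (by omega) (by omega) h
              omega), ?_⟩
          rintro x hx1 _ hx2 rfl
          simp only [List.mem_reverse, List.mem_map, List.mem_range] at hx1 hx2
          obtain ⟨t1, ht1, rfl⟩ := hx1
          obtain ⟨t2, ht2, heq⟩ := hx2
          have := hinj (m+t2) (0+t1) (by omega) (by omega) heq
          omega
        · rintro x hx1 _ hx2 rfl
          simp only [List.mem_append, List.mem_reverse, List.mem_map, List.mem_range] at hx1 hx2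
          obtain ⟨t1, ht1, rfl⟩ := hx1
          rcases hx2 with ⟨t2, ht2, heq⟩ | ⟨t2, ht2, heq⟩
          · have := hinj (0+t2) (j+1+t1) (by omega) (by omega) heq
            omega
          · have := hinj (m+t2) (j+1+t1) (by omega) (by omega) heq
            omega
      have hRpath : R.IsPath := Walk.IsPath.mk' hndup
      have hlen : R.length = k := by
        simp only [R, q1, q2, p2, Walk.length_append, Walk.length_cons, Walk.length_reverse,
          Walk.length_copy, length_seg]
        omega
      have hsub : ∀ x ∈ R.support, x ∈ Q.support := by
        intro x hx
        rw [hsup] at hx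
        simp only [List.mem_append, List.mem_reverse, List.mem_map, List.mem_range] at hx
        rcases hx with ⟨tt, htt, rfl⟩ | ⟨tt, htt, rfl⟩ | ⟨tt, htt, rfl⟩ <;>
          exact Walk.mem_support_iff_exists_getVert.mpr ⟨_, rfl, by omega⟩
      refine ⟨Q.getVert (j+1), R, hRpath, by omega, support_mem_iff_of hRpath hQ hsub (by omega), ?_⟩
      rw [← hjv]
      exact (Q.adj_getVert_succ (by omega)).symm
    · -- j ≥ m + 1 : new endpoint getVert (j-1)
      have hjm1 : m + 1 ≤ j := by omega
      let q1 : G.Walk (Q.getVert (j-1)) (Q.getVert m) :=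
        ((seg Q ((j-1)-m) m (by omega)).copy rfl (congrArg Q.getVert (by omega))).reverse
      let q3 : G.Walk (Q.getVert j) t :=
        (seg Q (k-j) j (by omega)).copy rfl
          (by rw [show j + (k-j) = k by omega]; exact Q.getVert_length)
      let R : G.Walk (Q.getVert (j-1)) t :=
        q1.append (Walk.cons hzadj.symm (p1.append (Walk.cons hadj_ij q3)))
      have hsup : R.support = ((List.range ((j-1)-m+1)).map (fun tt => Q.getVert (m+tt))).reverse
          ++ ((List.range (m-1+1)).map (fun tt => Q.getVert (0+tt))
          ++ (List.range (k-j+1)).map (fun tt => Q.getVert (j+tt))) := by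
        simp only [R, q1, q3, p1, Walk.support_append, Walk.support_cons, Walk.support_reverse,
          Walk.support_copy, support_seg, List.tail_cons]
      have hndup : R.support.Nodup := by
        rw [hsup, List.nodup_append]
        refine ⟨List.nodup_reverse.mpr (List.nodup_range.map_on (fun x hx y hy h => by
            simp only [List.mem_range] at hx hy
            have := hinj (m+x) (m+y) (by omega) (by omega) h
            omega)), ?_, ?_⟩
        · rw [List.nodup_append]
          refine ⟨List.nodup_range.map_on (fun x hx y hy h => by
              simp only [List.mem_range] at hx hy
              have := hinj (0+x) (0+y) (by omega) (by omega) h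
              omega), List.nodup_range.map_on (fun x hx y hy h => by
              simp only [List.mem_range] at hx hy
              have := hinj (j+x) (j+y) (by omega) (by omega) h
              omega), ?_⟩
          rintro x hx1 _ hx2 rfl
          simp only [List.mem_map, List.mem_range] at hx1 hx2
          obtain ⟨t1, ht1, rfl⟩ := hx1
          obtain ⟨t2, ht2, heq⟩ := hx2
          have := hinj (j+t2) (0+t1) (by omega) (by omega) heq
          omega
        · rintro x hx1 _ hx2 rfl
          simp only [List.mem_append, List.mem_reverse, List.mem_map, List.mem_range] at hx1 hx2
          obtain ⟨t1, ht1, rfl⟩ := hx1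
          rcases hx2 with ⟨t2, ht2, heq⟩ | ⟨t2, ht2, heq⟩
          · have := hinj (0+t2) (m+t1) (by omega) (by omega) heq
            omega
          · have := hinj (j+t2) (m+t1) (by omega) (by omega) heq
            have hub : m + t1 ≤ j - 1 := by omega
            omega
      have hRpath : R.IsPath := Walk.IsPath.mk' hndup
      have hlen : R.length = k := by
        simp only [R, q1, q3, p1, Walk.length_append, Walk.length_cons, Walk.length_reverse,
          Walk.length_copy, length_seg]
        omega
      have hsub : ∀ x ∈ R.support, x ∈ Q.support := by
        intro x hx
        rw [hsup] at hx
        simp only [List.mem_append, List.mem_reverse, List.mem_map, List.mem_range] at hx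
        rcases hx with ⟨tt, htt, rfl⟩ | ⟨tt, htt, rfl⟩ | ⟨tt, htt, rfl⟩ <;>
          exact Walk.mem_support_iff_exists_getVert.mpr ⟨_, rfl, by omega⟩
      refine ⟨Q.getVert (j-1), R, hRpath, by omega, support_mem_iff_of hRpath hQ hsub (by omega), ?_⟩
      rw [← hjv]
      have := Q.adj_getVert_succ (i := j-1) (by omega)
      rwa [show j - 1 + 1 = j by omega] at this


lemma reach_adjacent [Fintype V] (hconn : G.Connected) {s : Set V}
    (hs : ∀ ⦃x y : V⦄, G.Adj x y → (x ∈ s ↔ y ∉ s))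
    (hdeg : ∀ u v : V, G.edist u v = 3 →
      1 + (Nsphere G 2 u ∪ G.neighborSet v).ncard < deg G u + deg G v)
    {x0 xk : V} (P : G.Walk x0 xk) (hP : P.IsPath)
    (hmax : ∀ (a b : V) (R : G.Walk a b), R.IsPath → R.length ≤ P.length)
    (target : V) (htar : ¬ ((x0 ∈ s) ↔ (target ∈ s))) :
    ∃ (z : V) (Qz : G.Walk z xk), Qz.IsPath ∧ Qz.length = P.length ∧
      (∀ x, x ∈ Qz.support ↔ x ∈ P.support) ∧ G.Adj z target := by
  classical
  set D : Set ℕ := {n | ∃ (z : V) (Qz : G.Walk z xk), Qz.IsPath ∧ Qz.length = P.length ∧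
      (∀ x, x ∈ Qz.support ↔ x ∈ P.support) ∧ G.dist z target = n} with hD
  have hDne : D.Nonempty := ⟨G.dist x0 target, x0, P, hP, rfl, fun _ => Iff.rfl, rfl⟩
  obtain ⟨z, Qz, hQz, hQlen, hQsup, hdist⟩ := Nat.sInf_mem hDne
  have hzx0 : (z ∈ s) ↔ (x0 ∈ s) := by
    have h1 := walk_parity hs Qz
    have h2 := walk_parity hs P
    rw [hQlen] at h1
    tauto
  have hodd : ¬ Even (G.dist z target) := by
    obtain ⟨W, hW⟩ := (hconn z target).exists_walk_length_eq_dist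
    have h1 := walk_parity hs W
    rw [hW] at h1
    tauto
  have hmax' : ∀ (a b : V) (R : G.Walk a b), R.IsPath → R.length ≤ Qz.length := by
    intro a b R hR
    rw [hQlen]
    exact hmax a b R hR
  rcases Nat.lt_or_ge (G.dist z target) 3 with hlt | hge
  · have hd1 : G.dist z target = 1 := by
      rcases Nat.not_even_iff_odd.mp hodd with ⟨r, hr⟩
      omega
    exact ⟨z, Qz, hQz, hQlen, hQsup, dist_eq_one_iff_adj.mp hd1⟩
  · exfalso
    obtain ⟨w1, ha1, hd1⟩ := dist_step hconn (show G.dist z target = (G.dist z target - 1) + 1 by omega)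
    obtain ⟨w2, ha2, hd2⟩ := dist_step hconn (show G.dist w1 target = (G.dist z target - 2) + 1 by omega)
    obtain ⟨w3, ha3, hd3⟩ := dist_step hconn (show G.dist w2 target = (G.dist z target - 3) + 1 by omega)
    have hdw3 : G.dist z w3 = 3 := by
      have hle : G.dist z w3 ≤ 3 := by
        have := SimpleGraph.dist_le (Walk.cons ha1 (Walk.cons ha2 (Walk.cons ha3 Walk.nil)))
        simpa using this
      have htri := hconn.dist_triangle (u := z) (v := w3) (w := target)
      omega
    have hedist : G.edist z w3 = 3 := by
      rw [edist_coe_of_dist hconn, hdw3]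
      rfl
    obtain ⟨z', Q', hQ'path, hQ'len, hQ'sup, hadj⟩ := machinery hs hdeg Qz hQz hmax' hedist
    have hd' : G.dist z' target ≤ G.dist z target - 2 := by
      have htri := hconn.dist_triangle (u := z') (v := w3) (w := target)
      have hd1' : G.dist z' w3 ≤ 1 := by
        have := SimpleGraph.dist_le (Walk.cons hadj Walk.nil)
        simpa using this
      omega
    have hmem : G.dist z' target ∈ D :=
      ⟨z', Q', hQ'path, by omega, fun x => (hQ'sup x).trans (hQsup x), rfl⟩
    have := Nat.sInf_le hmem
    omega

lemma count_even_odd : ∀ n : ℕ, (((Finset.range n).filter (fun m => Even m)).card = (n+1)/2)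
    ∧ (((Finset.range n).filter (fun m => ¬ Even m)).card = n/2) := by
  intro n
  induction n with
  | zero => simp
  | succ n ih =>
    obtain ⟨ih1, ih2⟩ := ih
    rw [Finset.range_add_one, Finset.filter_insert, Finset.filter_insert]
    by_cases h : Even n
    · rw [if_pos h, if_neg (by simpa using h)]
      rw [Finset.card_insert_of_notMem (by simp)]
      obtain ⟨r, hr⟩ := h
      omega
    · rw [if_neg h, if_pos h]
      rw [Finset.card_insert_of_notMem (by simp)]
      obtain ⟨r, hr⟩ := Nat.not_even_iff_odd.mp h
      omega


end Stmt12Aux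


open Stmt12Aux in
/-- Let `G` be a connected finite balanced bipartite graph on at least four
vertices such that `d(u) + d(v) > 1 + |N_2(u) ∪ N(v)|` for every pair of vertices `u, v` with
`d(u,v) = 3`. Then the length of any path of `G` does not exceed the length of some cycle. -/
theorem stmt_12 {V : Type*} [Fintype V] (G : SimpleGraph V)
    (h4 : 4 ≤ Fintype.card V) (hconn : G.Connected)
    (hbip : ∃ s : Set V, (∀ ⦃x y : V⦄, G.Adj x y → (x ∈ s ↔ y ∉ s)) ∧ s.ncard = sᶜ.ncard)
    (hdeg : ∀ u v : V, G.edist u v = 3 →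
      1 + (Nsphere G 2 u ∪ G.neighborSet v).ncard < deg G u + deg G v) :
    ∀ (a b : V) (P : G.Walk a b), P.IsPath →
      ∃ (c : V) (C : G.Walk c c), C.IsCycle ∧ P.length ≤ C.length := by
  classical
  intro a b P0 hP0
  obtain ⟨s, hs, hcard⟩ := hbip
  set L : Set ℕ := {ℓ | ∃ (x y : V) (W : G.Walk x y), W.IsPath ∧ W.length = ℓ} with hL
  have hLne : L.Nonempty := ⟨P0.length, a, b, P0, hP0, rfl⟩
  have hLbdd : BddAbove L := by
    refine ⟨Fintype.card V, ?_⟩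
    rintro ℓ ⟨x, y, W, hW, rfl⟩
    exact (hW.length_lt).le
  obtain ⟨x0, xk, P, hP, hPk⟩ := Nat.sSup_mem hLne hLbdd
  have hmax : ∀ (c d : V) (R : G.Walk c d), R.IsPath → R.length ≤ P.length := by
    intro c d R hR
    rw [hPk]
    exact le_csSup hLbdd ⟨c, d, R, hR, rfl⟩
  have hP0k : P0.length ≤ P.length := hmax _ _ _ hP0
  have hk2 : 2 ≤ P.length := by
    obtain ⟨u, v, huv⟩ := Fintype.exists_pair_of_one_lt_card (α := V) (by omega)
    have h1 : 1 ≤ P.length := by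
      obtain ⟨W⟩ := hconn u v
      have hT := hmax _ _ (W.toPath : G.Walk u v) W.toPath.2
      by_contra h0
      have hzero : (W.toPath : G.Walk u v).length = 0 := by omega
      exact huv (Walk.eq_of_length_eq_zero hzero)
    by_contra hlt
    have hk1 : P.length = 1 := by omega
    have hadj : G.Adj x0 xk := by
      have h2 := P.adj_getVert_succ (show 0 < P.length by omega)
      rw [P.getVert_zero, show (0+1 : ℕ) = P.length by omega, P.getVert_length] at h2
      exact h2
    have hthird : ∃ w : V, w ≠ x0 ∧ w ≠ xk := by
      by_contra hcon
      push_neg at hcon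
      have hsub : (Finset.univ : Finset V) ⊆ {x0, xk} := by
        intro v _
        by_cases hv : v = x0
        · simp [hv]
        · simp [hcon v hv]
      have hcard2 := Finset.card_le_card hsub
      have : (({x0, xk} : Finset V)).card ≤ 2 := Finset.card_insert_le _ _ |>.trans (by simp)
      simp only [Finset.card_univ] at hcard2
      omega
    obtain ⟨w, hw0, hwk⟩ := hthird
    obtain ⟨W⟩ := hconn w x0
    have hTpath : (W.toPath : G.Walk w x0).IsPath := W.toPath.2
    have hTlen : (W.toPath : G.Walk w x0).length ≤ 1 := by
      have := hmax _ _ _ hTpath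
      omega
    have hTnz : (W.toPath : G.Walk w x0).length ≠ 0 := fun h => hw0 (Walk.eq_of_length_eq_zero h)
    have hadjwx0 : G.Adj w x0 := by
      have h2 := (W.toPath : G.Walk w x0).adj_getVert_succ (show 0 < _ by omega)
      rw [Walk.getVert_zero, show (0+1:ℕ) = (W.toPath : G.Walk w x0).length by omega,
        Walk.getVert_length] at h2
      exact h2
    let R : G.Walk xk w := Walk.cons hadj.symm (Walk.cons hadjwx0.symm Walk.nil)
    have hRpath : R.IsPath := by
      rw [Walk.isPath_def]
      simp only [R, Walk.support_cons, Walk.support_nil]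
      refine List.nodup_cons.mpr ⟨?_, List.nodup_cons.mpr ⟨?_, List.nodup_singleton _⟩⟩
      · intro hmem
        simp only [List.mem_cons, List.not_mem_nil, or_false] at hmem
        rcases hmem with h | h
        · exact hadj.ne' h
        · exact hwk h.symm
      · intro hmem
        simp only [List.mem_cons, List.not_mem_nil, or_false] at hmem
        exact hw0 hmem.symm
    have := hmax _ _ R hRpath
    simp only [R, Walk.length_cons, Walk.length_nil] at this
    omega
  have hkpar := walk_parity hs P
  by_cases hkeven : Even P.length
  · exfalso
    obtain ⟨bs, hbs_par, hbs_off⟩ : ∃ bs : V, ¬ ((x0 ∈ s) ↔ (bs ∈ s)) ∧ bs ∉ P.support := by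
      by_contra hcon
      have hcon' : ∀ x : V, ¬ ((x0 ∈ s) ↔ (x ∈ s)) → x ∈ P.support := by
        intro x hx
        by_contra hoff
        exact hcon ⟨x, hx, hoff⟩
      obtain ⟨hEc, hOc⟩ := count_even_odd (P.length+1)
      set Ef := (Finset.range (P.length+1)).filter (fun m => Even m) with hEf
      set Of := (Finset.range (P.length+1)).filter (fun m => ¬ Even m) with hOf
      have hAB : ({v : V | (x0 ∈ s) ↔ (v ∈ s)}).ncard = ({v : V | ¬ ((x0 ∈ s) ↔ (v ∈ s))}).ncard := by
        by_cases hx0s : x0 ∈ s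
        · have hA' : {v : V | (x0 ∈ s) ↔ (v ∈ s)} = s := by ext v; simp [hx0s]
          have hB' : {v : V | ¬ ((x0 ∈ s) ↔ (v ∈ s))} = sᶜ := by ext v; simp [hx0s]
          rw [hA', hB', hcard]
        · have hA' : {v : V | (x0 ∈ s) ↔ (v ∈ s)} = sᶜ := by ext v; simp [hx0s]
          have hB' : {v : V | ¬ ((x0 ∈ s) ↔ (v ∈ s))} = s := by ext v; simp [hx0s]
          rw [hA', hB', hcard]
      have hAsub : ↑(Ef.image P.getVert) ⊆ {v : V | (x0 ∈ s) ↔ (v ∈ s)} := by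
        intro x hx
        simp only [Finset.coe_image, Set.mem_image, Finset.mem_coe, hEf, Finset.mem_filter,
          Finset.mem_range] at hx
        obtain ⟨mm, ⟨hmr, hme⟩, rfl⟩ := hx
        exact (getVert_parity hs P (by omega)).mpr hme
      have hAcard : Ef.card ≤ ({v : V | (x0 ∈ s) ↔ (v ∈ s)}).ncard := by
        have h1 : (Ef.image P.getVert).card = Ef.card := Finset.card_image_of_injOn
          (fun mm hm nn hn h => by
            simp only [hEf, Finset.coe_filter, Set.mem_setOf_eq, Finset.mem_range] at hm hn
            exact getVert_injOn hP mm nn (by omega) (by omega) h)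
        calc Ef.card = (↑(Ef.image P.getVert) : Set V).ncard := by rw [Set.ncard_coe_finset, h1]
          _ ≤ _ := Set.ncard_le_ncard hAsub (Set.toFinite _)
      have hBsub : {v : V | ¬ ((x0 ∈ s) ↔ (v ∈ s))} ⊆ ↑(Of.image P.getVert) := by
        intro x hx
        have hxs := hcon' x hx
        obtain ⟨n, hn, hnk⟩ := Walk.mem_support_iff_exists_getVert.mp hxs
        simp only [Finset.coe_image, Set.mem_image, Finset.mem_coe, hOf, Finset.mem_filter,
          Finset.mem_range]
        refine ⟨n, ⟨by omega, ?_⟩, hn⟩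
        intro hne
        have hp := (getVert_parity hs P (by omega)).mpr hne
        rw [hn] at hp
        exact hx hp
      have hBcard : ({v : V | ¬ ((x0 ∈ s) ↔ (v ∈ s))}).ncard ≤ Of.card := by
        calc ({v : V | ¬ ((x0 ∈ s) ↔ (v ∈ s))}).ncard
            ≤ (↑(Of.image P.getVert) : Set V).ncard := Set.ncard_le_ncard hBsub (Set.toFinite _)
          _ ≤ Of.card := by rw [Set.ncard_coe_finset]; exact Finset.card_image_le
      obtain ⟨r, hr⟩ := hkeven
      omega
    obtain ⟨z, Qz, hQz, hQlen, hQsup, hadj⟩ := reach_adjacent hconn hs hdeg P hP hmax bs hbs_par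
    have hmem : bs ∈ Qz.support := nbr_mem_support hQz
      (by intro c d R hR; rw [hQlen]; exact hmax c d R hR) bs hadj
    exact hbs_off ((hQsup bs).mp hmem)
  · have hne : ¬ ((x0 ∈ s) ↔ (xk ∈ s)) := fun h => hkeven (hkpar.mp h)
    obtain ⟨z, Qz, hQz, hQlen, hQsup, hadj⟩ := reach_adjacent hconn hs hdeg P hP hmax xk hne
    have hedge : s(xk, z) ∉ Qz.edges := by
      intro he
      have h1e := edge_start hQz he
      have h2 : Qz.getVert Qz.length = xk := Qz.getVert_length
      have h3 := getVert_injOn hQz 1 Qz.length (by omega) (le_refl _) (by rw [h2, ← h1e])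
      omega
    have hC : (Walk.cons hadj.symm Qz).IsCycle := (Walk.cons_isCycle_iff Qz hadj.symm).mpr ⟨hQz, hedge⟩
    refine ⟨xk, Walk.cons hadj.symm Qz, hC, ?_⟩
    rw [Walk.length_cons]
    omega
end

section
/- Let G be a connected finite balanced bipartite graph on at least four vertices such that d(u) + d(v) > 1 + |N_2(u) ∪ N(v)| for every pair of vertices u, v ∈ V(G) with d(u,v) = 3. Then the diameter of G does not exceed 6. -/
open SimpleGraph

/-- On any walk, vertices `k` apart along the walk are at distance at most `k`. -/
private lemma aux_dist_getVert {V : Type*} {G : SimpleGraph V} (hconn : G.Connected)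
    {x y : V} (p : G.Walk x y) : ∀ (k i : ℕ), G.dist (p.getVert i) (p.getVert (i + k)) ≤ k := by
  intro k
  induction k with
  | zero => simp [SimpleGraph.dist_self]
  | succ k ih =>
    intro i
    by_cases hik : i + k < p.length
    · have hadj : G.Adj (p.getVert (i + k)) (p.getVert (i + k + 1)) :=
        p.adj_getVert_succ hik
      calc G.dist (p.getVert i) (p.getVert (i + (k + 1)))
          ≤ G.dist (p.getVert i) (p.getVert (i + k))
            + G.dist (p.getVert (i + k)) (p.getVert (i + k + 1)) := by
              have := hconn.dist_triangle (u := p.getVert i) (v := p.getVert (i + k))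
                (w := p.getVert (i + k + 1))
              simpa [← add_assoc] using this
        _ ≤ k + 1 := by
              have h1 : G.dist (p.getVert (i + k)) (p.getVert (i + k + 1)) ≤ 1 :=
                le_of_eq (SimpleGraph.dist_eq_one_iff_adj.mpr hadj)
              have := ih i
              omega
    · have h1 : p.getVert (i + k) = y := p.getVert_of_length_le (by omega)
      have h2 : p.getVert (i + (k + 1)) = y := p.getVert_of_length_le (by omega)
      have h3 := ih i
      rw [h1] at h3
      rw [h2]
      omega

/-- Key step: if `dist x w3 = 3`, `dist x w4 = 4` and `w3 ~ w4`, then the degree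
condition forces `deg w4 < deg w3`. -/
private lemma aux_key {V : Type*} [Fintype V] {G : SimpleGraph V} (hconn : G.Connected)
    {s : Set V} (hs : ∀ ⦃a b : V⦄, G.Adj a b → (a ∈ s ↔ b ∉ s))
    (hdeg : ∀ u v : V, G.edist u v = 3 →
      1 + (Nsphere G 2 u ∪ G.neighborSet v).ncard < deg G u + deg G v)
    {x w3 w4 : V} (h3 : G.dist x w3 = 3) (h4 : G.dist x w4 = 4) (hadj : G.Adj w3 w4) :
    deg G w4 < deg G w3 := by
  have hne : ∀ u v : V, G.edist u v ≠ ⊤ := fun u v =>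
    SimpleGraph.edist_ne_top_iff_reachable.mpr (hconn u v)
  have hed : ∀ (u v : V) (k : ℕ), G.dist u v = k → G.edist u v = k := by
    intro u v k h
    rw [← h]
    show G.edist u v = ((G.edist u v).toNat : ℕ∞)
    exact (ENat.coe_toNat (hne u v)).symm
  -- apply the hypothesis with u = w3, v = x
  have he3 : G.edist w3 x = 3 := hed _ _ 3 (by rwa [SimpleGraph.dist_comm])
  have hmain := hdeg w3 x he3
  -- the set N(w4) \ {w3} is inside Nsphere G 2 w3
  set T : Set V := G.neighborSet w4 \ {w3} with hT
  have hTsub : T ⊆ Nsphere G 2 w3 := by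
    rintro z ⟨hz1, hz2⟩
    simp only [SimpleGraph.mem_neighborSet] at hz1
    simp only [Set.mem_singleton_iff] at hz2
    -- dist w3 z ≤ 2
    have hle : G.dist w3 z ≤ 2 := by
      have := hconn.dist_triangle (u := w3) (v := w4) (w := z)
      have e1 : G.dist w3 w4 = 1 := SimpleGraph.dist_eq_one_iff_adj.mpr hadj
      have e2 : G.dist w4 z = 1 := SimpleGraph.dist_eq_one_iff_adj.mpr hz1
      omega
    have hne0 : G.dist w3 z ≠ 0 :=
      fun h => hz2 (hconn.dist_eq_zero_iff.mp h).symm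
    have hne1 : G.dist w3 z ≠ 1 := by
      rw [ne_eq, SimpleGraph.dist_eq_one_iff_adj]
      intro hadj2
      have p1 := hs hadj
      have p2 := hs hz1
      have p3 := hs hadj2
      tauto
    have : G.dist w3 z = 2 := by omega
    exact hed w3 z 2 this
  -- T is disjoint from N(x)
  have hdisj : Disjoint T (G.neighborSet x) := by
    rw [Set.disjoint_left]
    rintro z ⟨hz1, _⟩ hzx
    simp only [SimpleGraph.mem_neighborSet] at hz1 hzx
    have : G.dist x w4 ≤ 2 := by
      have := hconn.dist_triangle (u := x) (v := z) (w := w4)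
      have e1 : G.dist x z = 1 := SimpleGraph.dist_eq_one_iff_adj.mpr hzx
      have e2 : G.dist z w4 = 1 := SimpleGraph.dist_eq_one_iff_adj.mpr hz1.symm
      omega
    omega
  -- cardinality estimates
  have hsub2 : T ∪ G.neighborSet x ⊆ Nsphere G 2 w3 ∪ G.neighborSet x :=
    Set.union_subset_union_left _ hTsub
  have hfin : (Nsphere G 2 w3 ∪ G.neighborSet x).Finite := Set.toFinite _
  have hcard1 : (T ∪ G.neighborSet x).ncard ≤ (Nsphere G 2 w3 ∪ G.neighborSet x).ncard :=
    Set.ncard_le_ncard hsub2 hfin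
  have hcard2 : (T ∪ G.neighborSet x).ncard = T.ncard + (G.neighborSet x).ncard :=
    Set.ncard_union_eq hdisj (Set.toFinite _) (Set.toFinite _)
  have hmem : w3 ∈ G.neighborSet w4 := hadj.symm
  have hcard3 : T.ncard = (G.neighborSet w4).ncard - 1 :=
    Set.ncard_diff_singleton_of_mem hmem
  have hpos : 1 ≤ (G.neighborSet w4).ncard :=
    (Set.ncard_pos (Set.toFinite _)).mpr ⟨w3, hmem⟩
  have hdx : deg G x = (G.neighborSet x).ncard := rfl
  have hd4 : deg G w4 = (G.neighborSet w4).ncard := rfl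
  omega

/-- Let `G` be a connected finite balanced bipartite graph on at least four
vertices such that `d(u) + d(v) > 1 + |N_2(u) ∪ N(v)|` for every pair of vertices `u, v` with
`d(u,v) = 3`. Then the diameter of `G` does not exceed 6. -/
theorem stmt_13 {V : Type*} [Fintype V] (G : SimpleGraph V)
    (h4 : 4 ≤ Fintype.card V) (hconn : G.Connected)
    (hbip : ∃ s : Set V, (∀ ⦃x y : V⦄, G.Adj x y → (x ∈ s ↔ y ∉ s)) ∧ s.ncard = sᶜ.ncard)
    (hdeg : ∀ u v : V, G.edist u v = 3 →
      1 + (Nsphere G 2 u ∪ G.neighborSet v).ncard < deg G u + deg G v) :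
    ∀ x y : V, G.dist x y ≤ 6 := by
  obtain ⟨s, hs, -⟩ := hbip
  intro x y
  by_contra hlt
  push_neg at hlt
  obtain ⟨p, hp⟩ := (hconn x y).exists_walk_length_eq_dist
  have hL : 7 ≤ p.length := by omega
  -- distances from x along the walk are exact
  have hfwd : ∀ i, G.dist x (p.getVert i) ≤ i := by
    intro i
    have := aux_dist_getVert hconn p i 0
    simpa [p.getVert_zero] using this
  have hbwd : ∀ i, i ≤ p.length → G.dist (p.getVert i) y ≤ p.length - i := by
    intro i hi
    have := aux_dist_getVert hconn p (p.length - i) i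
    rwa [Nat.add_sub_cancel' hi, p.getVert_length] at this
  have hexact : ∀ i, i ≤ p.length → G.dist x (p.getVert i) = i := by
    intro i hi
    have h1 := hfwd i
    have h2 := hbwd i hi
    have h3 := hconn.dist_triangle (u := x) (v := p.getVert i) (w := y)
    omega
  set w3 := p.getVert 3 with hw3
  set w4 := p.getVert 4 with hw4
  set w7 := p.getVert 7 with hw7
  have d3 : G.dist x w3 = 3 := hexact 3 (by omega)
  have d4 : G.dist x w4 = 4 := hexact 4 (by omega)
  have d7 : G.dist x w7 = 7 := hexact 7 (by omega)
  have hadj34 : G.Adj w3 w4 := p.adj_getVert_succ (by omega)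
  -- dist w7 w4 = 3 and dist w7 w3 = 4
  have d74 : G.dist w7 w4 = 3 := by
    have hle : G.dist w4 w7 ≤ 3 := aux_dist_getVert hconn p 3 4
    have htri := hconn.dist_triangle (u := x) (v := w4) (w := w7)
    rw [SimpleGraph.dist_comm]
    omega
  have d73 : G.dist w7 w3 = 4 := by
    have hle : G.dist w3 w7 ≤ 4 := aux_dist_getVert hconn p 4 3
    have htri := hconn.dist_triangle (u := x) (v := w3) (w := w7)
    rw [SimpleGraph.dist_comm]
    omega
  have k1 : deg G w4 < deg G w3 := aux_key hconn hs hdeg d3 d4 hadj34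
  have k2 : deg G w3 < deg G w4 := aux_key hconn hs hdeg d74 d73 hadj34.symm
  omega
end

section
/- Let G be a connected finite graph on at least three vertices such that d(u) + d(v) ≥ |N(u) ∪ N(v) ∪ N(x)| for every path uxv on three vertices with uv ∉ E(G). Then G is Hamiltonian. -/
open SimpleGraph List
set_option linter.unusedSectionVars false

namespace AK
variable {V : Type*} [DecidableEq V] (G : SimpleGraph V)

def IsCyc (l : List V) : Prop := 3 ≤ l.length ∧ l.Nodup ∧ (l ++ l.take 1).Chain' G.Adj

def Nxt (l : List V) (a b : V) : Prop :=
  (∃ l₁ l₂, l = l₁ ++ a :: b :: l₂) ∨ (∃ l₂, l = b :: l₂ ++ [a])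

variable {G}


lemma Nxt.mem_left {l : List V} {a b : V} (h : Nxt l a b) : a ∈ l := by
  rcases h with ⟨l₁, l₂, rfl⟩ | ⟨l₂, rfl⟩ <;> simp

lemma Nxt.mem_right {l : List V} {a b : V} (h : Nxt l a b) : b ∈ l := by
  rcases h with ⟨l₁, l₂, rfl⟩ | ⟨l₂, rfl⟩ <;> simp

lemma nxt_exists {l : List V} (hl : 2 ≤ l.length) {w : V} (hw : w ∈ l) : ∃ p, Nxt l p w := by
  rcases l with _ | ⟨a, t⟩
  · simp at hw
  rcases eq_or_ne w a with rfl | hne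
  · rcases t.eq_nil_or_concat with rfl | ⟨l₂, p, rfl⟩
    · simp at hl
    · exact ⟨p, Or.inr ⟨l₂, by simp⟩⟩
  · have hwt : w ∈ t := by simpa [hne] using hw
    clear hw hl hne
    induction t generalizing a with
    | nil => simp at hwt
    | cons b t ih =>
      rcases eq_or_ne w b with rfl | hne2
      · exact ⟨a, Or.inl ⟨[], t, rfl⟩⟩
      · have hwt' : w ∈ t := by simpa [hne2] using hwt
        obtain ⟨p, hp | hp⟩ := ih b hwt'
        · obtain ⟨l₁, l₂, h⟩ := hp
          exact ⟨p, Or.inl ⟨a :: l₁, l₂, by simp [h]⟩⟩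
        · obtain ⟨l₂, h⟩ := hp
          have : w = b := by
            have := congrArg List.head? h
            simpa using this.symm
          exact absurd this hne2



lemma decomp_unique {w : V} : ∀ {l l₁ l₂ m₁ m₂ : List V}, l.Nodup →
    l = l₁ ++ w :: l₂ → l = m₁ ++ w :: m₂ → l₁ = m₁ ∧ l₂ = m₂ := by
  intro l l₁
  induction l₁ generalizing l with
  | nil =>
    intro l₂ m₁ m₂ hn h1 h2
    cases m₁ with
    | nil => subst h1; simp_all
    | cons b m' =>
      subst h1
      obtain ⟨rfl, h⟩ := by simpa using h2
      have : w ∉ l₂ := by simpa using hn.notMem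
      rw [h] at this; simp at this
  | cons a l₁' ih =>
    intro l₂ m₁ m₂ hn h1 h2
    cases m₁ with
    | nil =>
      subst h2
      obtain ⟨rfl, h⟩ := by simpa using h1
      have : w ∉ m₂ := by simpa using hn.notMem
      rw [h] at this; simp at this
    | cons b m' =>
      subst h1
      obtain ⟨rfl, h⟩ := by simpa using h2
      obtain ⟨h1', h2'⟩ := ih (l := l₁' ++ w :: l₂) (by simpa using hn.of_cons) rfl h
      exact ⟨by rw [h1'], h2'⟩

lemma nxt_unique_right {l : List V} {p w w' : V} (hn : l.Nodup)
    (h1 : Nxt l p w) (h2 : Nxt l p w') : w = w' := by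
  rcases h1 with ⟨l₁, l₂, e1⟩ | ⟨l₂, e1⟩ <;> rcases h2 with ⟨m₁, m₂, e2⟩ | ⟨m₂, e2⟩
  · obtain ⟨-, h⟩ := decomp_unique (w := p) hn e1 e2
    have h' : w = w' ∧ l₂ = m₂ := by simpa using h
    exact h'.1
  · obtain ⟨-, h⟩ := decomp_unique (w := p) hn e1
      (show l = (w' :: m₂) ++ p :: [] by rw [e2])
    simp at h
  · obtain ⟨-, h⟩ := decomp_unique (w := p) hn e2
      (show l = (w :: l₂) ++ p :: [] by rw [e1])
    simp at h
  · have h := e1.symm.trans e2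
    have := congrArg List.head? h
    simpa using this

lemma nxt_unique_left {l : List V} {p p' w : V} (hn : l.Nodup)
    (h1 : Nxt l p w) (h2 : Nxt l p' w) : p = p' := by
  rcases h1 with ⟨l₁, l₂, e1⟩ | ⟨l₂, e1⟩ <;> rcases h2 with ⟨m₁, m₂, e2⟩ | ⟨m₂, e2⟩
  · obtain ⟨h, -⟩ := decomp_unique (w := w) hn
      (show l = (l₁ ++ [p]) ++ w :: l₂ by rw [e1]; simp)
      (show l = (m₁ ++ [p']) ++ w :: m₂ by rw [e2]; simp)
    have := congrArg List.getLast? h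
    simpa using this
  · obtain ⟨h, -⟩ := decomp_unique (w := w) hn
      (show l = (l₁ ++ [p]) ++ w :: l₂ by rw [e1]; simp)
      (show l = [] ++ w :: (m₂ ++ [p']) by rw [e2]; simp)
    simp at h
  · obtain ⟨h, -⟩ := decomp_unique (w := w) hn
      (show l = (m₁ ++ [p']) ++ w :: m₂ by rw [e2]; simp)
      (show l = [] ++ w :: (l₂ ++ [p]) by rw [e1]; simp)
    simp at h
  · have h := e1.symm.trans e2
    have h2 : l₂ ++ [p] = m₂ ++ [p'] := by
      have := congrArg List.tail h
      simpa using this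
    have := congrArg List.getLast? h2
    simpa using this

lemma nxt_adj {l : List V} {a b : V} (h : (l ++ l.take 1).Chain' G.Adj)
    (hn : Nxt l a b) : G.Adj a b := by
  rcases hn with ⟨l₁, l₂, rfl⟩ | ⟨l₂, rfl⟩
  · have h1 : (l₁ ++ a :: b :: l₂).Chain' G.Adj := (List.isChain_append.1 h).1
    have h2 := (List.isChain_append.1 h1).2.1
    exact (List.isChain_cons_cons.1 h2).1
  · have := (List.isChain_append.1 (by simpa using h :
      ((b :: l₂ ++ [a]) ++ [b]).Chain' G.Adj)).2.2
    exact this a (show a ∈ ((b :: l₂) ++ [a]).getLast? by rw [List.getLast?_concat]; rfl) b rfl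
lemma nxt_rot {a p w : V} {t : List V} (h : Nxt (a :: t) p w) : Nxt (t ++ [a]) p w := by
  rcases h with ⟨l₁, l₂, e⟩ | ⟨l₂, e⟩
  · cases l₁ with
    | nil =>
      obtain ⟨rfl, rfl⟩ : a = p ∧ t = w :: l₂ := by simpa using e
      exact Or.inr ⟨l₂, by simp⟩
    | cons c l₁' =>
      obtain ⟨rfl, rfl⟩ : a = c ∧ t = l₁' ++ p :: w :: l₂ := by simpa using e
      exact Or.inl ⟨l₁', l₂ ++ [a], by simp⟩
  · obtain ⟨rfl, rfl⟩ : a = w ∧ t = l₂ ++ [p] := by simpa using e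
    exact Or.inl ⟨l₂, [], by simp⟩

lemma rot_isCyc {a : V} {t : List V} (h : IsCyc G (a :: t)) : IsCyc G (t ++ [a]) := by
  obtain ⟨hlen, hnd, hch⟩ := h
  cases t with
  | nil => simp at hlen
  | cons b t' =>
    refine ⟨by simp at hlen ⊢; omega, ((List.perm_append_singleton a (b :: t')).symm.nodup hnd), ?_⟩
    have hch' : (a :: (b :: (t' ++ [a]))).Chain' G.Adj := by
      simpa using hch
    obtain ⟨hab, hrest⟩ := List.isChain_cons_cons.1 hch'
    show ((b :: (t' ++ [a])) ++ [b]).Chain' G.Adj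
    refine List.isChain_append.2 ⟨hrest, by simp, ?_⟩
    intro x hx y hy
    have hx' : x = a := by
      rw [show b :: (t' ++ [a]) = (b :: t') ++ [a] from rfl, List.getLast?_concat] at hx
      exact (by simpa using hx : a = x).symm
    have hy' : y = b := (by simpa using hy : b = y).symm
    subst hx'; subst hy'
    exact hab


lemma nxt_rot_iff {a p z : V} {t : List V} (hC : IsCyc G (a :: t)) :
    Nxt (t ++ [a]) p z ↔ Nxt (a :: t) p z := by
  constructor
  · intro h
    have hz : z ∈ a :: t := by
      have := h.mem_right
      simp only [List.mem_append, List.mem_cons, List.mem_singleton] at this ⊢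
      tauto
    obtain ⟨p₀, hp₀⟩ := nxt_exists (show 2 ≤ (a :: t).length by have := hC.1; omega) hz
    have h₀ : Nxt (t ++ [a]) p₀ z := nxt_rot hp₀
    have hnd : (t ++ [a]).Nodup := (rot_isCyc hC).2.1
    rw [nxt_unique_left hnd h h₀]
    exact hp₀
  · exact nxt_rot

lemma rot_front {w : V} : ∀ n, ∀ {l : List V}, IsCyc G l → w ∈ l → l.idxOf w = n →
    ∃ s, IsCyc G (w :: s) ∧ (w :: s).Perm l ∧ ∀ p z, (Nxt (w :: s) p z ↔ Nxt l p z) := by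
  intro n
  induction n with
  | zero =>
    intro l hC hw hidx
    rcases l with _ | ⟨a, t⟩
    · simp at hw
    rcases eq_or_ne a w with rfl | hne
    · exact ⟨t, hC, List.Perm.refl _, fun _ _ => Iff.rfl⟩
    · rw [List.idxOf_cons_ne _ hne] at hidx
      simp at hidx
  | succ m ih =>
    intro l hC hw hidx
    rcases l with _ | ⟨a, t⟩
    · simp at hw
    rcases eq_or_ne a w with rfl | hne
    · exact ⟨t, hC, List.Perm.refl _, fun _ _ => Iff.rfl⟩
    · have hwt : w ∈ t := by
        rcases List.mem_cons.1 hw with rfl | h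
        · exact absurd rfl hne
        · exact h
      have hidx' : (t ++ [a]).idxOf w = m := by
        rw [List.idxOf_append_of_mem hwt]
        rw [List.idxOf_cons_ne _ hne] at hidx
        omega
      obtain ⟨s, hC', hperm, hiff⟩ := ih (rot_isCyc hC) (by simp [hwt]) hidx'
      exact ⟨s, hC', hperm.trans (List.perm_append_singleton a t),
        fun p z => (hiff p z).trans (nxt_rot_iff hC)⟩



lemma flip_adj : flip G.Adj = G.Adj := by
  funext a b
  exact propext (G.adj_comm b a)

lemma nxt_decomp_left {w z : V} {P Q : List V} :
    Nxt (w :: P ++ z :: Q) ((w :: P).getLast (by simp)) z := by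
  refine Or.inl ⟨(w :: P).dropLast, Q, ?_⟩
  conv_lhs => rw [← List.dropLast_append_getLast (l := w :: P) (by simp)]
  simp

lemma nxt_decomp_right {w z : V} {P Q : List V} :
    Nxt (w :: P ++ z :: Q) ((z :: Q).getLast (by simp)) w := by
  refine Or.inr ⟨P ++ (z :: Q).dropLast, ?_⟩
  conv_lhs => rw [show w :: P ++ z :: Q = w :: (P ++ (z :: Q)) by simp,
    ← List.dropLast_append_getLast (l := z :: Q) (by simp)]
  simp

/-- Surgery 1: insert `x` between the last vertex and the head `w`. -/
lemma surg1 {w x p : V} {l₂ : List V} (hC : IsCyc G (w :: l₂ ++ [p]))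
    (hpx : G.Adj p x) (hxw : G.Adj x w) (hx : x ∉ w :: l₂ ++ [p]) :
    IsCyc G ((w :: l₂ ++ [p]) ++ [x]) := by
  obtain ⟨hlen, hnd, hch⟩ := hC
  have hch' : ((w :: l₂ ++ [p]) ++ [w]).Chain' G.Adj := by simpa using hch
  refine ⟨by simp, ?_, ?_⟩
  · rw [List.nodup_append]
    exact ⟨hnd, by simp, by intro a ha b hb; simp at hb; subst hb; exact fun h => hx (h ▸ ha)⟩
  · have h1 : (w :: l₂ ++ [p]).Chain' G.Adj := (List.isChain_append.1 hch').1
    have goal : ((w :: l₂ ++ [p]) ++ [x, w]).Chain' G.Adj := by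
      refine List.isChain_append.2 ⟨h1, by simp [hxw], ?_⟩
      intro a ha b hb
      have ha' : a = p := by
        rw [show w :: l₂ ++ [p] = (w :: l₂) ++ [p] by simp, List.getLast?_concat] at ha
        simpa using ha.symm
      have hb' : b = x := (by simpa using hb : x = b).symm
      subst ha'; subst hb'
      exact hpx
    have e : (w :: l₂ ++ [p]) ++ [x] ++ List.take 1 ((w :: l₂ ++ [p]) ++ [x])
        = (w :: l₂ ++ [p]) ++ [x, w] := by simp
    rw [e]
    exact goal

/-- Surgery 2: insert path `z, x` between the last vertex and the head `w`. -/
lemma surg2 {w x z p : V} {l₂ : List V} (hC : IsCyc G (w :: l₂ ++ [p]))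
    (hpz : G.Adj p z) (hzx : G.Adj z x) (hxw : G.Adj x w)
    (hz : z ∉ w :: l₂ ++ [p]) (hx : x ∉ w :: l₂ ++ [p]) (hzx' : z ≠ x) :
    IsCyc G ((w :: l₂ ++ [p]) ++ [z, x]) := by
  obtain ⟨hlen, hnd, hch⟩ := hC
  have hch' : ((w :: l₂ ++ [p]) ++ [w]).Chain' G.Adj := by simpa using hch
  refine ⟨by simp, ?_, ?_⟩
  · rw [List.nodup_append]
    refine ⟨hnd, by simp [hzx'], ?_⟩
    intro a ha b hb h
    subst h
    simp at hb
    rcases hb with rfl | rfl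
    · exact hz ha
    · exact hx ha
  · have h1 : (w :: l₂ ++ [p]).Chain' G.Adj := (List.isChain_append.1 hch').1
    have goal : ((w :: l₂ ++ [p]) ++ [z, x, w]).Chain' G.Adj := by
      refine List.isChain_append.2 ⟨h1, by simp [hzx, hxw], ?_⟩
      intro a ha b hb
      have ha' : a = p := by
        rw [show w :: l₂ ++ [p] = (w :: l₂) ++ [p] by simp, List.getLast?_concat] at ha
        simpa using ha.symm
      have hb' : b = z := (by simpa using hb : z = b).symm
      subst ha'; subst hb'
      exact hpz
    have e : (w :: l₂ ++ [p]) ++ [z, x] ++ List.take 1 ((w :: l₂ ++ [p]) ++ [z, x])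
        = (w :: l₂ ++ [p]) ++ [z, x, w] := by simp
    rw [e]
    exact goal

/-- Surgery 3: the reversal surgery using a chord between the two predecessors. -/
lemma surg3 {w z x : V} {P Q : List V}
    (hC : IsCyc G (w :: P ++ z :: Q))
    (hxw : G.Adj x w) (hxz : G.Adj x z) (hx : x ∉ w :: P ++ z :: Q)
    (hchord : G.Adj ((w :: P).getLast (by simp)) ((z :: Q).getLast (by simp))) :
    IsCyc G (x :: z :: (Q ++ (w :: P).reverse)) := by
  obtain ⟨hlen, hnd, hch⟩ := hC
  have hch' : ((w :: P) ++ ((z :: Q) ++ [w])).Chain' G.Adj := by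
    simpa using hch
  obtain ⟨hcWP, hcZQW, hjunc⟩ := List.isChain_append.1 hch'
  have hcZQ : (z :: Q).Chain' G.Adj := (List.isChain_append.1 hcZQW).1
  have hrev : ((w :: P).reverse).Chain' G.Adj :=
    List.isChain_reverse.2 (hcWP.imp fun _ _ h => h.symm)
  have hperm : (x :: z :: (Q ++ (w :: P).reverse)).Perm (x :: (w :: P ++ z :: Q)) := by
    refine List.Perm.cons x ?_
    rw [List.perm_iff_count]
    intro b
    simp only [List.count_append, List.count_reverse, List.count_cons]
    omega
  refine ⟨?_, ?_, ?_⟩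
  · have := hlen
    simp at this ⊢
    omega
  · refine hperm.symm.nodup ?_
    exact List.nodup_cons.2 ⟨hx, hnd⟩
  · have goal : ((x :: z :: Q) ++ ((w :: P).reverse ++ [x])).Chain' G.Adj := by
      refine List.isChain_append.2 ⟨List.isChain_cons_cons.2 ⟨hxz, hcZQ⟩, ?_, ?_⟩
      · refine List.isChain_append.2 ⟨hrev, by simp, ?_⟩
        intro a ha b hb
        have ha' : a = w := by
          rw [List.getLast?_eq_head?_reverse, List.reverse_reverse] at ha
          exact (by simpa using ha : w = a).symm
        have hb' : b = x := (by simpa using hb : x = b).symm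
        subst ha'; subst hb'
        exact hxw.symm
      · intro a ha b hb
        have ha2 : a ∈ (z :: Q).getLast? := by
          rw [List.getLast?_cons_cons] at ha
          exact ha
        obtain ⟨h1, rfl⟩ := List.mem_getLast?_eq_getLast ha2
        have hb2 : b ∈ (w :: P).getLast? := by
          rw [List.head?_append_of_ne_nil _ (by simp), ← List.getLast?_eq_head?_reverse] at hb
          exact hb
        obtain ⟨h2, rfl⟩ := List.mem_getLast?_eq_getLast hb2
        exact hchord.symm
    have e : x :: z :: (Q ++ (w :: P).reverse)
        ++ List.take 1 (x :: z :: (Q ++ (w :: P).reverse))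
        = (x :: z :: Q) ++ ((w :: P).reverse ++ [x]) := by simp
    rw [e]
    exact goal


lemma card_helper {A B C : Finset V} (h : (A ∪ B ∪ C).card ≤ A.card + B.card) :
    (C \ (A ∪ B)).card ≤ (A ∩ B).card := by
  have h1 : (C \ (A ∪ B)).card + (A ∪ B).card = (C ∪ (A ∪ B)).card :=
    Finset.card_sdiff_add_card C (A ∪ B)
  have h2 : (A ∪ B).card + (A ∩ B).card = A.card + B.card :=
    Finset.card_union_add_card_inter A B
  have h3 : C ∪ (A ∪ B) = A ∪ B ∪ C := Finset.union_comm _ _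
  rw [h3] at h1
  omega

lemma boundary [Fintype V] (hconn : G.Connected) (s : Finset V) (hs : s.Nonempty)
    (hns : s ≠ Finset.univ) : ∃ a ∈ s, ∃ b ∉ s, G.Adj a b := by
  obtain ⟨u, hu⟩ := hs
  have : ∃ v, v ∉ s := by
    by_contra h
    push_neg at h
    exact hns (Finset.eq_univ_iff_forall.2 h)
  obtain ⟨v, hv⟩ := this
  obtain ⟨p⟩ := hconn.preconnected u v
  clear hns
  induction p with
  | nil => exact absurd hu hv
  | @cons a c v h p ih =>
    by_cases hc : c ∈ s
    · exact ih hc hv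
    · exact ⟨a, hu, c, hc, h⟩

/-- Build a walk from a chain of adjacent vertices. -/
def mkw : (a b : V) → (t : List V) → (a :: t ++ [b]).Chain' G.Adj → G.Walk a b
  | a, b, [], h => Walk.cons (List.isChain_cons_cons.1 h).1 Walk.nil
  | a, b, c :: t, h => Walk.cons (List.isChain_cons_cons.1 h).1
      (mkw c b t (List.isChain_cons_cons.1 h).2)

lemma mkw_support : ∀ (a b : V) (t : List V) (h : (a :: t ++ [b]).Chain' G.Adj),
    (mkw a b t h).support = a :: t ++ [b]
  | a, b, [], h => by simp [mkw]
  | a, b, c :: t, h => by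
    simp only [mkw, Walk.support_cons]
    exact congrArg (a :: ·) (mkw_support c b t _)

lemma edge_not_in_path {c a : V} (q : G.Walk c a) (hnd : q.support.Nodup)
    (hlen : 2 ≤ q.length) : s(a, c) ∉ q.edges := by
  intro hmem
  cases q with
  | nil => simp at hmem
  | @cons _ c₁ _ h₁ q₁ =>
    rw [Walk.edges_cons, List.mem_cons] at hmem
    rcases hmem with heq | hmem
    · rw [Sym2.eq_iff] at heq
      rcases heq with ⟨h1, h2⟩ | ⟨h1, -⟩
      · rw [Walk.support_cons] at hnd
        exact (List.nodup_cons.1 hnd).1 (h1 ▸ Walk.end_mem_support q₁)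
      · subst h1
        -- q₁ : Walk a a with nodup support ⇒ q₁ = nil ⇒ length = 1 < 2
        have hnd₁ : q₁.support.Nodup := by
          rw [Walk.support_cons] at hnd
          exact hnd.of_cons
        have hpath : q₁.IsPath := Walk.IsPath.mk' hnd₁
        have : q₁ = Walk.nil := by
          have := SimpleGraph.Path.loop_eq (p := (⟨q₁, hpath⟩ : G.Path a a))
          simpa [SimpleGraph.Path.nil] using congrArg Subtype.val this
        subst this
        simp [Walk.length_cons] at hlen
    · have hcmem : c ∈ q₁.support :=
        Walk.fst_mem_support_of_mem_edges q₁ (by rwa [Sym2.eq_swap] at hmem)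
      rw [Walk.support_cons] at hnd
      exact (List.nodup_cons.1 hnd).1 hcmem

/-- A full-length cycle list gives a Hamiltonian cycle. -/
lemma isCyc_to_hamiltonian [Fintype V] {l : List V} (hC : IsCyc G l)
    (hfull : l.length = Fintype.card V) : G.IsHamiltonian := by
  intro _
  obtain ⟨hlen, hnd, hch⟩ := hC
  rcases l with _ | ⟨a, t⟩
  · simp at hlen
  rcases t with _ | ⟨c, t'⟩
  · simp at hlen
  -- chain with wrap
  have hch' : (a :: (c :: t') ++ [a]).Chain' G.Adj := by simpa using hch
  obtain ⟨hac, hch''⟩ := List.isChain_cons_cons.1 (show (a :: c :: (t' ++ [a])).Chain' G.Adj by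
    simpa using hch')
  -- the path from c to a
  have hq : (c :: t' ++ [a]).Chain' G.Adj := hch''
  set q : G.Walk c a := mkw c a t' hq with hqdef
  have hqsup : q.support = c :: t' ++ [a] := mkw_support c a t' hq
  have hqnd : q.support.Nodup := by
    rw [hqsup]
    exact (List.perm_append_singleton a (c :: t')).symm.nodup hnd
  have hqlen : 2 ≤ q.length := by
    have := congrArg List.length hqsup
    rw [Walk.length_support] at this
    simp at this hlen
    omega
  have hqpath : q.IsPath := Walk.IsPath.mk' hqnd
  have hedge : s(a, c) ∉ q.edges := edge_not_in_path q hqnd hqlen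
  refine ⟨a, Walk.cons hac q, ?_⟩
  rw [Walk.isHamiltonianCycle_iff_isCycle_and_support_count_tail_eq_one]
  constructor
  · exact (Walk.cons_isCycle_iff q hac).2 ⟨hqpath, hedge⟩
  · intro b
    have hmemall : ∀ v : V, v ∈ a :: c :: t' := by
      intro v
      have hcard : (a :: c :: t').toFinset.card = Fintype.card V := by
        rw [List.toFinset_card_of_nodup hnd]
        simpa using hfull
      have := Finset.eq_univ_of_card _ hcard
      have hv : v ∈ (a :: c :: t').toFinset := this ▸ Finset.mem_univ v
      simpa using hv
    have hsup : (Walk.cons hac q).support.tail = c :: t' ++ [a] := by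
      rw [Walk.support_cons, List.tail_cons, hqsup]
    rw [hsup]
    refine List.count_eq_one_of_mem
      ((List.perm_append_singleton a (c :: t')).symm.nodup hnd) ?_
    have := hmemall b
    rcases List.mem_cons.1 this with rfl | h
    · simp
    · simp only [List.mem_append, List.mem_cons]
      simp at h
      tauto


lemma nxt_head {w p : V} {s : List V} (hnd : (w :: s).Nodup)
    (h : Nxt (w :: s) p w) : ∃ l₂, s = l₂ ++ [p] := by
  rcases h with ⟨l₁, l₂, e⟩ | ⟨l₂, e⟩
  · obtain ⟨h1, -⟩ := decomp_unique (w := w) hnd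
      (show w :: s = (l₁ ++ [p]) ++ w :: l₂ by rw [e]; simp)
      (show w :: s = [] ++ w :: s by simp)
    simp at h1
  · exact ⟨l₂, by simpa using e⟩

section Engine
variable [Fintype V] {G : SimpleGraph V} [DecidableRel G.Adj]

/-- The main contradiction: a maximum-length non-Hamiltonian cycle is impossible. -/
lemma engine (hconn : G.Connected)
    (key : ∀ a c b : V, G.Adj a c → G.Adj c b → a ≠ b → ¬ G.Adj a b →
      (G.neighborFinset c \ (G.neighborFinset a ∪ G.neighborFinset b)).card ≤
      (G.neighborFinset a ∩ G.neighborFinset b).card)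
    {l : List V} (hC : IsCyc G l)
    (hmax : ∀ l', IsCyc G l' → l'.length ≤ l.length)
    (hfull : l.length ≠ Fintype.card V) : False := by
  classical
  obtain ⟨hlen3, hnd, hch⟩ := hC
  have hC' : IsCyc G l := ⟨hlen3, hnd, hch⟩
  have hlen2 : 2 ≤ l.length := by omega
  have hlne : l.toFinset ≠ Finset.univ := by
    intro h
    have := congrArg Finset.card h
    rw [List.toFinset_card_of_nodup hnd, Finset.card_univ] at this
    exact hfull this
  have hlnonempty : l.toFinset.Nonempty := by
    rcases l with _ | ⟨a, t⟩
    · simp at hlen3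
    · exact ⟨a, by simp⟩
  obtain ⟨y, hy, x, hx, hyx⟩ := boundary hconn l.toFinset hlnonempty hlne
  rw [List.mem_toFinset] at hy
  rw [List.mem_toFinset] at hx
  -- predecessor function
  have hex : ∀ w : V, ∃ p, (w ∈ l → Nxt l p w) := by
    intro w
    by_cases hw : w ∈ l
    · exact (nxt_exists hlen2 hw).imp (fun p h _ => h)
    · exact ⟨w, fun h => absurd h hw⟩
  choose pw hpw using hex
  have hK2 : ∀ w ∈ l, G.Adj (pw w) w := fun w hw => nxt_adj hch (hpw w hw)
  have hK1 : ∀ w ∈ l, pw w ∈ l := fun w hw => (hpw w hw).mem_left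
  have hK3 : ∀ w ∈ l, ∀ w' ∈ l, pw w = pw w' → w = w' := by
    intro w hw w' hw' he
    exact nxt_unique_right hnd (hpw w hw) (he ▸ hpw w' hw')
  have hK4 : ∀ w ∈ l, pw w ≠ x := fun w hw he => hx (he ▸ hK1 w hw)
  -- the set W
  set W : Finset V := l.toFinset.filter (fun w => G.Adj x w) with hWdef
  have hmemW : ∀ w, w ∈ W ↔ (w ∈ l ∧ G.Adj x w) := by
    intro w
    simp [hWdef]
  have hyW : y ∈ W := (hmemW y).2 ⟨hy, hyx.symm⟩
  -- rotations
  have hrot : ∀ w ∈ l, ∃ s, IsCyc G (w :: s) ∧ (w :: s).Perm l ∧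
      ∀ p z, Nxt (w :: s) p z ↔ Nxt l p z :=
    fun w hw => rot_front _ hC' hw rfl
  -- F1
  have hF1 : ∀ w ∈ W, ¬ G.Adj x (pw w) := by
    intro w hw hadj
    obtain ⟨hwl, hxw⟩ := (hmemW w).1 hw
    obtain ⟨s, hCs, hperm, hiff⟩ := hrot w hwl
    have hnxt : Nxt (w :: s) (pw w) w := (hiff _ _).2 (hpw w hwl)
    obtain ⟨l₂, rfl⟩ := nxt_head hCs.2.1 hnxt
    have hxnot : x ∉ w :: l₂ ++ [pw w] := fun hmem => hx (hperm.mem_iff.1 hmem)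
    have hnew := surg1 hCs hadj.symm hxw hxnot
    have hle := hmax _ hnew
    have hplen := hperm.length_eq
    simp at hle hplen
    omega
  -- F2
  have hF2 : ∀ w ∈ W, ∀ z, G.Adj (pw w) z → G.Adj z x → z ∈ l := by
    intro w hw z hpz hzx
    by_contra hzl
    obtain ⟨hwl, hxw⟩ := (hmemW w).1 hw
    obtain ⟨s, hCs, hperm, hiff⟩ := hrot w hwl
    have hnxt : Nxt (w :: s) (pw w) w := (hiff _ _).2 (hpw w hwl)
    obtain ⟨l₂, rfl⟩ := nxt_head hCs.2.1 hnxt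
    have hxnot : x ∉ w :: l₂ ++ [pw w] := fun hmem => hx (hperm.mem_iff.1 hmem)
    have hznot : z ∉ w :: l₂ ++ [pw w] := fun hmem => hzl (hperm.mem_iff.1 hmem)
    have hnew := surg2 hCs hpz hzx hxw hznot hxnot (G.ne_of_adj hzx)
    have hle := hmax _ hnew
    have hplen := hperm.length_eq
    simp at hle hplen
    omega
  -- F3
  have hF3 : ∀ w ∈ W, ∀ z ∈ W, z ≠ w → ¬ G.Adj (pw z) (pw w) := by
    intro w hw z hz hne hadj
    obtain ⟨hwl, hxw⟩ := (hmemW w).1 hw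
    obtain ⟨hzl, hxz⟩ := (hmemW z).1 hz
    obtain ⟨s, hCs, hperm, hiff⟩ := hrot w hwl
    have hzs : z ∈ s := by
      have : z ∈ w :: s := hperm.mem_iff.2 hzl
      rcases List.mem_cons.1 this with h | h
      · exact absurd h hne
      · exact h
    obtain ⟨P, Q, rfl⟩ := List.append_of_mem hzs
    have h1 : Nxt (w :: P ++ z :: Q) ((w :: P).getLast (by simp)) z := nxt_decomp_left
    have h2 : Nxt (w :: P ++ z :: Q) ((z :: Q).getLast (by simp)) w := nxt_decomp_right
    have hpz_eq : pw z = (w :: P).getLast (by simp) :=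
      nxt_unique_left hCs.2.1 ((hiff _ _).2 (hpw z hzl)) h1
    have hpw_eq : pw w = (z :: Q).getLast (by simp) :=
      nxt_unique_left hCs.2.1 ((hiff _ _).2 (hpw w hwl)) h2
    have hchord : G.Adj ((w :: P).getLast (by simp)) ((z :: Q).getLast (by simp)) := by
      rw [← hpz_eq, ← hpw_eq]
      exact hadj
    have hxnot : x ∉ w :: P ++ z :: Q := fun hmem => hx (hperm.mem_iff.1 hmem)
    have hnew := surg3 hCs hxw hxz hxnot hchord
    have hle := hmax _ hnew
    have hplen := hperm.length_eq
    simp at hle hplen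
    omega
  -- per-vertex inequality
  have hineq : ∀ w ∈ W, (W.filter (fun z => z ≠ w ∧ G.Adj w (pw z))).card + 1 ≤
      (W.filter (fun z => z ≠ w ∧ G.Adj z (pw w))).card := by
    intro w hw
    obtain ⟨hwl, hxw⟩ := (hmemW w).1 hw
    have hk := key (pw w) w x (hK2 w hwl) (hxw.symm) (hK4 w hwl)
      (fun h => hF1 w hw h.symm)
    -- upper bound on the intersection
    have hsub1 : G.neighborFinset (pw w) ∩ G.neighborFinset x ⊆
        insert w (W.filter (fun z => z ≠ w ∧ G.Adj z (pw w))) := by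
      intro u hu
      rw [Finset.mem_inter, mem_neighborFinset, mem_neighborFinset] at hu
      have hul : u ∈ l := hF2 w hw u hu.1 hu.2.symm
      rcases eq_or_ne u w with rfl | hne
      · exact Finset.mem_insert_self _ _
      · refine Finset.mem_insert_of_mem (Finset.mem_filter.2 ⟨(hmemW u).2 ⟨hul, hu.2⟩,
          hne, hu.1.symm⟩)
    have h5 : (G.neighborFinset (pw w) ∩ G.neighborFinset x).card ≤
        (W.filter (fun z => z ≠ w ∧ G.Adj z (pw w))).card + 1 :=
      (Finset.card_le_card hsub1).trans (Finset.card_insert_le _ _)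
    -- lower bound on the difference
    set Tin := W.filter (fun z => z ≠ w ∧ G.Adj w (pw z)) with hTin
    have hsub2 : insert (pw w) (insert x (Tin.image pw)) ⊆
        G.neighborFinset w \ (G.neighborFinset (pw w) ∪ G.neighborFinset x) := by
      intro u hu
      rw [Finset.mem_sdiff, mem_neighborFinset, Finset.mem_union,
        mem_neighborFinset, mem_neighborFinset]
      rcases Finset.mem_insert.1 hu with rfl | hu
      · exact ⟨(hK2 w hwl).symm, fun h => (h.elim (fun h2 => G.irrefl h2)
          (fun h2 => hF1 w hw h2))⟩
      rcases Finset.mem_insert.1 hu with rfl | hu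
      · exact ⟨hxw.symm, fun h => h.elim (fun h2 => hF1 w hw h2.symm) (fun h2 => G.irrefl h2)⟩
      obtain ⟨z, hzTin, rfl⟩ := Finset.mem_image.1 hu
      obtain ⟨hzW, hznw, hwpz⟩ := Finset.mem_filter.1 hzTin
      refine ⟨hwpz, fun h => h.elim ?_ ?_⟩
      · intro h2
        exact hF3 w hw z hzW hznw h2.symm
      · intro h2
        exact hF1 z hzW h2
    have hcard2 : (insert (pw w) (insert x (Tin.image pw))).card = Tin.card + 2 := by
      rw [Finset.card_insert_of_notMem, Finset.card_insert_of_notMem]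
      · have : (Tin.image pw).card = Tin.card := by
          refine Finset.card_image_of_injOn ?_
          intro a ha b hb he
          have haW := (Finset.mem_filter.1 ha).1
          have hbW := (Finset.mem_filter.1 hb).1
          exact hK3 a ((hmemW a).1 haW).1 b ((hmemW b).1 hbW).1 he
        omega
      · intro hmem
        obtain ⟨z, hzTin, he⟩ := Finset.mem_image.1 hmem
        exact hK4 z ((hmemW z).1 (Finset.mem_filter.1 hzTin).1).1 he
      · intro hmem
        rcases Finset.mem_insert.1 hmem with he | hmem
        · exact hK4 w hwl he
        · obtain ⟨z, hzTin, he⟩ := Finset.mem_image.1 hmem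
          obtain ⟨hzW, hznw, -⟩ := Finset.mem_filter.1 hzTin
          exact hznw (hK3 z ((hmemW z).1 hzW).1 w hwl he)
    have h6 : Tin.card + 2 ≤
        (G.neighborFinset w \ (G.neighborFinset (pw w) ∪ G.neighborFinset x)).card := by
      rw [← hcard2]
      exact Finset.card_le_card hsub2
    omega
  -- summation contradiction
  have hsum_eq : ∑ w ∈ W, (W.filter (fun z => z ≠ w ∧ G.Adj z (pw w))).card =
      ∑ w ∈ W, (W.filter (fun z => z ≠ w ∧ G.Adj w (pw z))).card := by
    simp only [Finset.card_filter]
    rw [Finset.sum_comm]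
    refine Finset.sum_congr rfl (fun w _ => Finset.sum_congr rfl (fun z _ => ?_))
    refine if_congr ?_ rfl rfl
    constructor
    · rintro ⟨h1, h2⟩
      exact ⟨h1.symm, h2⟩
    · rintro ⟨h1, h2⟩
      exact ⟨h1.symm, h2⟩
  have hsum_le := Finset.sum_le_sum hineq
  rw [Finset.sum_add_distrib, Finset.sum_const, smul_eq_mul, mul_one, hsum_eq] at hsum_le
  have hWpos : 0 < W.card := Finset.card_pos.2 ⟨y, hyW⟩
  omega

end Engine

end AK

open AK in
/-- Let `G` be a connected finite graph on at least three vertices such that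
`d(u) + d(v) ≥ |N(u) ∪ N(v) ∪ N(x)|` for every path `uxv` with `uv ∉ E(G)`.
Then `G` is Hamiltonian. -/
theorem stmt_16 {V : Type*} [Fintype V] [DecidableEq V] (G : SimpleGraph V)
    (h3 : 3 ≤ Fintype.card V) (hconn : G.Connected)
    (hdeg : ∀ u x v : V, G.Adj u x → G.Adj x v → u ≠ v → ¬ G.Adj u v →
      (G.neighborSet u ∪ G.neighborSet v ∪ G.neighborSet x).ncard ≤ deg G u + deg G v) :
    G.IsHamiltonian := by
  classical
  have hNF : ∀ v : V, deg G v = (G.neighborFinset v).card := by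
    intro v
    rw [deg, ← Set.ncard_coe_finset]
    congr 1
    rw [neighborFinset_def]
    simp
  have key : ∀ a c b : V, G.Adj a c → G.Adj c b → a ≠ b → ¬ G.Adj a b →
      (G.neighborFinset c \ (G.neighborFinset a ∪ G.neighborFinset b)).card ≤
      (G.neighborFinset a ∩ G.neighborFinset b).card := by
    intro a c b h1 h2 hne h4
    apply card_helper
    have h := hdeg a c b h1 h2 hne h4
    have e1 : G.neighborSet a ∪ G.neighborSet b ∪ G.neighborSet c =
        ((G.neighborFinset a ∪ G.neighborFinset b ∪ G.neighborFinset c : Finset V) : Set V) := by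
      simp [neighborFinset_def, Set.union_assoc]
    rw [e1, Set.ncard_coe_finset, hNF, hNF] at h
    exact h
  -- a base cycle exists
  have hbase : ∃ l, IsCyc G l := by
    have hV : Nonempty V := Fintype.card_pos_iff.1 (by omega)
    obtain ⟨a⟩ := hV
    obtain ⟨a', ha', b, hb, hab⟩ := boundary hconn {a} ⟨a, by simp⟩ (by
      intro h
      have := congrArg Finset.card h
      simp [Finset.card_univ] at this
      omega)
    rw [Finset.mem_singleton] at ha'
    subst ha'
    obtain ⟨c, hc, d, hd, hcd⟩ := boundary hconn {a', b} ⟨a', by simp⟩ (by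
      intro h
      have := congrArg Finset.card h
      rw [Finset.card_univ] at this
      have h2 : ({a', b} : Finset V).card ≤ 2 :=
        (Finset.card_insert_le _ _).trans (by simp)
      omega)
    rw [Finset.mem_insert, Finset.mem_singleton] at hc
    rw [Finset.mem_insert, Finset.mem_singleton] at hd
    push_neg at hd
    obtain ⟨u, m, v, hum, hmv, hunev⟩ : ∃ u m v : V, G.Adj u m ∧ G.Adj m v ∧ u ≠ v := by
      rcases hc with rfl | rfl
      · exact ⟨b, c, d, hab.symm, hcd, fun h => hd.2 h.symm⟩
      · exact ⟨a', c, d, hab, hcd, fun h => hd.1 h.symm⟩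
    by_cases huv : G.Adj u v
    · refine ⟨[u, m, v], by norm_num, ?_, ?_⟩
      · simp [hum.ne, hmv.ne, hunev]
      · simp only [List.take, List.cons_append, List.nil_append, List.isChain_cons_cons,
          List.isChain_singleton, and_true]
        exact .cons_cons hum (.cons_cons hmv (.cons_cons huv.symm (.singleton _)))
    · have hk := key u m v hum hmv hunev huv
      have hsub : ({u, v} : Finset V) ⊆
          G.neighborFinset m \ (G.neighborFinset u ∪ G.neighborFinset v) := by
        intro t ht
        rw [Finset.mem_insert, Finset.mem_singleton] at ht
        rw [Finset.mem_sdiff, mem_neighborFinset, Finset.mem_union,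
          mem_neighborFinset, mem_neighborFinset]
        rcases ht with rfl | rfl
        · exact ⟨hum.symm, fun h => h.elim (fun h2 => G.irrefl h2)
            (fun h2 => huv (h2.symm))⟩
        · exact ⟨hmv, fun h => h.elim (fun h2 => huv h2) (fun h2 => G.irrefl h2)⟩
      have h2le : 2 ≤ (G.neighborFinset u ∩ G.neighborFinset v).card := by
        have hc2 : ({u, v} : Finset V).card = 2 := by
          rw [Finset.card_insert_of_notMem (by simpa using hunev), Finset.card_singleton]
        calc 2 = ({u, v} : Finset V).card := hc2.symm
          _ ≤ _ := Finset.card_le_card hsub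
          _ ≤ _ := hk
      obtain ⟨m', hm', hm'ne⟩ := Finset.exists_mem_ne
        (s := G.neighborFinset u ∩ G.neighborFinset v) (by omega) m
      rw [Finset.mem_inter, mem_neighborFinset, mem_neighborFinset] at hm'
      refine ⟨[u, m, v, m'], by norm_num, ?_, ?_⟩
      · have hmm' : m ≠ m' := fun h => hm'ne h.symm
        simp only [List.nodup_cons, List.mem_cons, List.mem_singleton, List.not_mem_nil,
          not_false_eq_true, List.nodup_nil, and_true, not_or]
        exact ⟨⟨hum.ne, hunev, hm'.1.ne⟩, ⟨hmv.ne, hmm'⟩, hm'.2.ne⟩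
      · simp only [List.take, List.cons_append, List.nil_append, List.isChain_cons_cons,
          List.isChain_singleton, and_true]
        exact .cons_cons hum (.cons_cons hmv (.cons_cons hm'.2 (.cons_cons hm'.1.symm (.singleton _))))
  -- pick a longest cycle
  have hSne : Set.Nonempty {k | ∃ l, IsCyc G l ∧ l.length = k} := by
    obtain ⟨l, hl⟩ := hbase
    exact ⟨l.length, l, hl, rfl⟩
  have hSbdd : BddAbove {k | ∃ l, IsCyc G l ∧ l.length = k} := by
    refine ⟨Fintype.card V, ?_⟩
    rintro k ⟨l, hC, rfl⟩
    exact hC.2.1.length_le_card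
  obtain ⟨l, hC, hlen⟩ := Nat.sSup_mem hSne hSbdd
  have hmax : ∀ l', IsCyc G l' → l'.length ≤ l.length := by
    intro l' h
    rw [hlen]
    exact le_csSup hSbdd ⟨l', h, rfl⟩
  by_cases hfull : l.length = Fintype.card V
  · exact isCyc_to_hamiltonian hC hfull
  · exact (engine hconn key hC hmax hfull).elim
end

section
/- Let G be a connected finite graph on at least three vertices such that d(u) ≥ (1/2)|M_3(u)| for every vertex u ∈ V(G). Then G is Hamiltonian. -/
open SimpleGraph

section AK

variable {V : Type*} [DecidableEq V] {G : SimpleGraph V}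

/-- A cycle, encoded as a list of (distinct) vertices with cyclically consecutive
vertices adjacent. -/
private def IsCyc (G : SimpleGraph V) (l : List V) : Prop :=
  l.Nodup ∧ 3 ≤ l.length ∧
    ∀ i : Fin l.length, G.Adj (l.get i) (l.get ⟨(i+1) % l.length, Nat.mod_lt _ i.pos⟩)

private lemma IsCyc.ne_nil {l : List V} (h : IsCyc G l) : l ≠ [] := by
  intro hl
  have := h.2.1
  rw [hl] at this
  simp at this

private lemma isCyc_of_chain {l : List V} (hnd : l.Nodup) (hlen : 3 ≤ l.length)
    (hch : List.Chain' G.Adj l)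
    (hwrap : ∀ (h : l ≠ []), G.Adj (l.getLast h) (l.head h)) : IsCyc G l := by
  have hne : l ≠ [] := by intro h; simp [h] at hlen
  refine ⟨hnd, hlen, fun i => ?_⟩
  rcases lt_or_ge (i+1 : ℕ) l.length with h | h
  · have := List.isChain_iff_getElem.1 hch i (by omega)
    convert this using 2
    all_goals simp only [List.get_eq_getElem, Nat.mod_eq_of_lt h]
  · have hi : (i:ℕ) = l.length - 1 := by have := i.2; omega
    have h0 : ((i:ℕ)+1) % l.length = 0 := by
      have : (i:ℕ)+1 = l.length := by omega
      simp [this]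
    have hgl : l.get i = l.getLast hne := by
      simp only [List.getLast_eq_getElem, List.get_eq_getElem, hi]
    have hh : l.get ⟨((i:ℕ)+1) % l.length, Nat.mod_lt _ i.pos⟩ = l.head hne := by
      rw [show (⟨((i:ℕ)+1) % l.length, Nat.mod_lt _ i.pos⟩ : Fin l.length)
        = ⟨0, by omega⟩ from Fin.ext h0, List.get_mk_zero]
    rw [hh, hgl]
    exact hwrap hne

private lemma IsCyc.chain' {l : List V} (h : IsCyc G l) : List.Chain' G.Adj l := by
  show List.IsChain G.Adj l
  rw [List.isChain_iff_getElem]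
  intro i hi
  have := h.2.2 ⟨i, by omega⟩
  convert this using 2
  all_goals simp only [List.get_eq_getElem, Fin.val_mk, Nat.mod_eq_of_lt (show i+1 < l.length by omega)]

private lemma IsCyc.wrap {l : List V} (h : IsCyc G l) (hne : l ≠ []) :
    G.Adj (l.getLast hne) (l.head hne) := by
  have hpos : 0 < l.length := List.length_pos_iff.2 hne
  have := h.2.2 ⟨l.length - 1, by omega⟩
  have h0 : (l.length - 1 + 1) % l.length = 0 := by
    have : l.length - 1 + 1 = l.length := by omega
    simp [this]
  convert this using 2
  · simp [List.getLast_eq_getElem, List.get_eq_getElem]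
  · rw [show (⟨(l.length-1+1) % l.length, Nat.mod_lt _ hpos⟩ : Fin l.length)
        = ⟨0, by omega⟩ from Fin.ext h0, List.get_mk_zero]

private lemma IsCyc.rotate {l : List V} (h : IsCyc G l) (n : ℕ) : IsCyc G (l.rotate n) := by
  obtain ⟨hnd, hlen, hadj⟩ := h
  have hlr : (l.rotate n).length = l.length := List.length_rotate l n
  refine ⟨List.nodup_rotate.2 hnd, by omega, fun i => ?_⟩
  have h1 := List.get_rotate l n i
  have h2 := List.get_rotate l n ⟨((i:ℕ)+1) % (l.rotate n).length, Nat.mod_lt _ i.pos⟩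
  rw [h1, h2]
  have hpos : 0 < l.length := by omega
  have e : ((((i:ℕ)+1) % (l.rotate n).length) + n) % l.length
      = (((i:ℕ)+n) % l.length + 1) % l.length := by
    simp only [List.length_rotate, Nat.mod_add_mod]
    ring_nf
  have := hadj ⟨((i:ℕ)+n) % l.length, Nat.mod_lt _ (by omega)⟩
  convert this using 2
  exact Fin.ext e

private lemma IsCyc.adj_next {l : List V} (h : IsCyc G l) {x : V} (hx : x ∈ l) :
    G.Adj x (l.next x hx) := by
  obtain ⟨i, rfl⟩ := List.mem_iff_get.1 hx
  convert h.2.2 i using 1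
  exact List.next_getElem l h.1 i i.2

private lemma next_inj {l : List V} (hnd : l.Nodup) {x y : V} (hx : x ∈ l) (hy : y ∈ l)
    (h : l.next x hx = l.next y hy) : x = y := by
  have h1 := List.prev_next l hnd x hx
  have h2 := List.prev_next l hnd y hy
  rw [← h1, ← h2]
  congr 1

private lemma prev_inj {l : List V} (hnd : l.Nodup) {x y : V} (hx : x ∈ l) (hy : y ∈ l)
    (h : l.prev x hx = l.prev y hy) : x = y := by
  have h1 := List.next_prev l hnd x hx
  have h2 := List.next_prev l hnd y hy
  rw [← h1, ← h2]
  congr 1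

private lemma IsCyc.adj_prev {l : List V} (h : IsCyc G l) {x : V} (hx : x ∈ l) :
    G.Adj (l.prev x hx) x := by
  have h1 := h.adj_next (List.prev_mem l x hx)
  rwa [List.next_prev l h.1 x hx] at h1

/-- Vertices reachable from a vertex of an adjacency-closed set lie in the set. -/
private lemma mem_of_closed {S : Set V} (hcl : ∀ a ∈ S, ∀ b, G.Adj a b → b ∈ S) {a : V}
    (ha : a ∈ S) (hconn : G.Connected) (v : V) : v ∈ S := by
  have key : ∀ {x y : V} (_ : G.Walk x y), x ∈ S → y ∈ S := by
    intro x y p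
    induction p with
    | nil => exact id
    | cons h q ih => exact fun hx => ih (hcl _ hx _ h)
  exact key ((hconn.preconnected a v).some) ha

private lemma head?_forall {t : List V} (ht : t ≠ []) {P : V → Prop} (h : P (t.head ht)) :
    ∀ y ∈ t.head?, P y := by
  intro y hy
  rw [List.head?_eq_head ht, Option.mem_def, Option.some.injEq] at hy
  exact hy ▸ h

/-- Surgery 1: absorbing an outside vertex adjacent to head and last. -/
private lemma isCyc_cons {C : List V} (h : IsCyc G C) {x : V} (hx : x ∉ C)
    (h1 : G.Adj x (C.head h.ne_nil)) (h2 : G.Adj (C.getLast h.ne_nil) x) :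
    IsCyc G (x :: C) := by
  have hne := h.ne_nil
  have hlen := h.2.1
  refine isCyc_of_chain (List.nodup_cons.2 ⟨hx, h.1⟩) (by simp only [List.length_cons]; omega)
    ?_ ?_
  · exact h.chain'.cons (head?_forall hne h1)
  · intro h'
    rw [List.getLast_cons hne, List.head_cons]
    exact h2

/-- Surgery 2: absorbing a path of two outside vertices between head and second vertex. -/
private lemma isCyc_insert {u : V} {t : List V} (h : IsCyc G (u :: t)) (ht : t ≠ []) {x z : V}
    (hx : x ∉ u :: t) (hz : z ∉ u :: t) (hxz : x ≠ z)
    (h1 : G.Adj u x) (h2 : G.Adj x z) (h3 : G.Adj z (t.head ht)) :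
    IsCyc G (u :: x :: z :: t) := by
  have hch := h.chain'
  have hlen := h.2.1
  refine isCyc_of_chain ?_ (by simp only [List.length_cons] at *; omega) ?_ ?_
  · have hnd := h.1
    simp only [List.nodup_cons, List.mem_cons, not_or] at hnd hx hz ⊢
    exact ⟨⟨fun e => hx.1 e.symm, fun e => hz.1 e.symm, hnd.1⟩, ⟨hxz, hx.2⟩, hz.2, hnd.2⟩
  · refine List.IsChain.cons_cons h1 (List.IsChain.cons_cons h2 ?_)
    have hcht : List.Chain' G.Adj t := hch.tail
    exact hcht.cons (head?_forall ht h3)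
  · intro h'
    have : (u :: x :: z :: t).getLast h' = t.getLast ht := by
      rw [List.getLast_cons (by simp [ht]), List.getLast_cons (by simp [ht]), List.getLast_cons ht]
    rw [this, List.head_cons]
    have := h.wrap h.ne_nil
    rwa [List.getLast_cons ht, List.head_cons] at this

/-- Surgery 3: the crossing extension. -/
private lemma isCyc_cross {u x : V} {P Q : List V} (h : IsCyc G (u :: (P ++ Q)))
    (hP : P ≠ []) (hQ : Q ≠ []) (hx : x ∉ u :: (P ++ Q))
    (h1 : G.Adj u x) (h2 : G.Adj x (P.getLast hP)) (h3 : G.Adj (P.head hP) (Q.head hQ)) :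
    IsCyc G (u :: x :: (P.reverse ++ Q)) := by
  have hPQ : P ++ Q ≠ [] := by simp [hP]
  have hRQ : P.reverse ++ Q ≠ [] := by simp [hQ]
  have hlen := h.2.1
  have hperm : (u :: x :: (P.reverse ++ Q)).Perm (x :: u :: (P ++ Q)) := by
    refine List.Perm.trans ?_ (List.Perm.swap x u _)
    exact ((P.reverse_perm.append_right Q).cons x).cons u
  have hchPQ : List.Chain' G.Adj (P ++ Q) := h.chain'.tail
  have hchP : List.Chain' G.Adj P := (List.isChain_append.1 hchPQ).1
  have hchQ : List.Chain' G.Adj Q := (List.isChain_append.1 hchPQ).2.1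
  refine isCyc_of_chain ?_ ?_ ?_ ?_
  · exact hperm.nodup_iff.2 (List.nodup_cons.2 ⟨hx, h.1⟩)
  · simp only [List.length_cons, List.length_append, List.length_reverse] at hlen ⊢
    omega
  · refine List.IsChain.cons_cons h1 (List.IsChain.cons ?_ ?_)
    · refine List.isChain_append.2 ⟨?_, hchQ, ?_⟩
      · exact List.isChain_reverse.2 (hchP.imp fun a b hab => hab.symm)
      · intro a ha b hb
        rw [List.getLast?_reverse, List.head?_eq_head hP, Option.mem_def,
          Option.some.injEq] at ha
        rw [List.head?_eq_head hQ, Option.mem_def, Option.some.injEq] at hb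
        rw [← ha, ← hb]
        exact h3
    · intro y hy
      rw [List.head?_eq_head hRQ, Option.mem_def, Option.some.injEq] at hy
      have : (P.reverse ++ Q).head hRQ = P.getLast hP := by
        rw [List.head_append]
        rw [dif_neg (by simp [hP])]
        exact List.head_reverse _
      rw [← hy, this]
      exact h2
  · intro h'
    have e1 : (u :: x :: (P.reverse ++ Q)).getLast h' = Q.getLast hQ := by
      rw [List.getLast_cons (by simp [hQ]), List.getLast_cons hRQ, List.getLast_append]
      rw [dif_neg (by simp [hQ])]
    have e2 : (u :: (P ++ Q)).getLast (by simp) = Q.getLast hQ := by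
      rw [List.getLast_cons hPQ, List.getLast_append]
      rw [dif_neg (by simp [hQ])]
    have := h.wrap h.ne_nil
    rw [e2, List.head_cons] at this
    rw [e1, List.head_cons]
    exact this

private lemma next_eq_of_ne {u : V} {t : List V} (htne : t ≠ []) (hC : (u :: t).Nodup) {v : V}
    (hv : v ∈ u :: t) (hvu : v ≠ u)
    (hvl : v ≠ (u :: t).getLast (by simp)) :
    ∃ (P Q : List V) (hP : P ≠ []) (hQ : Q ≠ []),
      t = P ++ Q ∧ P.getLast hP = v ∧ P.head hP = t.head htne ∧
      Q.head hQ = (u :: t).next v hv := by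
  classical
  have hvt : v ∈ t := (List.mem_cons.1 hv).resolve_left hvu
  obtain ⟨j, hjlt, hgetj⟩ := List.mem_iff_getElem.1 hvt
  have hjne : j ≠ t.length - 1 := by
    intro he
    apply hvl
    rw [List.getLast_cons htne, List.getLast_eq_getElem, ← hgetj]
    congr 1
    try omega
  have hjlt' : j + 1 < t.length := by omega
  have hjlen : (t.take (j+1)).length = j + 1 := by rw [List.length_take]; omega
  have hPne : t.take (j+1) ≠ [] := by
    intro he; rw [he] at hjlen; simp at hjlen
  have hQne : t.drop (j+1) ≠ [] := by
    intro he
    have := List.length_drop (i := j+1) (l := t)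
    rw [he] at this; simp at this; omega
  refine ⟨t.take (j+1), t.drop (j+1), hPne, hQne, (List.take_append_drop _ t).symm, ?_, ?_, ?_⟩
  · rw [List.getLast_eq_getElem]
    simp only [hjlen, Nat.add_sub_cancel]
    rw [List.getElem_take]
    exact hgetj
  · rw [List.head_eq_getElem, List.head_eq_getElem, List.getElem_take]
  · have hjC : j + 1 < (u :: t).length := by simp; omega
    have hvC : (u :: t).get ⟨j+1, hjC⟩ = v := by
      rw [List.get_eq_getElem, List.getElem_cons_succ]
      exact hgetj
    have hnext := List.next_getElem (u :: t) hC (j+1) hjC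
    simp only [List.get_eq_getElem, List.getElem_cons_succ, hgetj] at hnext
    rw [List.head_eq_getElem, List.getElem_drop]
    rw [hnext]
    simp only [List.length_cons, Nat.mod_eq_of_lt (show j + 1 + 1 < t.length + 1 by omega),
      List.getElem_cons_succ, Nat.add_zero]

private lemma no_cross {u y : V} {s : List V} (hC : IsCyc G (u :: y :: s))
    (hmax : ∀ l, IsCyc G l → l.length ≤ (u :: y :: s).length)
    {x : V} (hx : x ∉ u :: y :: s) (hux : G.Adj u x)
    {v : V} (hv : v ∈ u :: y :: s) (hxv : G.Adj x v)
    (hynext : G.Adj y ((u :: y :: s).next v hv)) : False := by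
  by_cases hvu : v = u
  · subst hvu
    rw [List.next_cons_cons_eq] at hynext
    exact G.irrefl hynext
  by_cases hvl : v = (u :: y :: s).getLast (by simp)
  · have hnew := isCyc_cons hC hx (by rw [List.head_cons]; exact hux.symm)
      (by rw [← hvl]; exact hxv.symm)
    have := hmax _ hnew
    simp at this
  · obtain ⟨P, Q, hP, hQ, htPQ, hPl, hPh, hQh⟩ :=
      next_eq_of_ne (List.cons_ne_nil y s) hC.1 hv hvu hvl
    have hC' : IsCyc G (u :: (P ++ Q)) := by rw [← htPQ]; exact hC
    have hx' : x ∉ u :: (P ++ Q) := by rw [← htPQ]; exact hx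
    have h2 : G.Adj x (P.getLast hP) := by rw [hPl]; exact hxv
    have h3 : G.Adj (P.head hP) (Q.head hQ) := by
      rw [hPh, hQh]
      simpa using hynext
    have hle := hmax _ (isCyc_cross hC' hP hQ hx' hux h2 h3)
    have hlenP : P.length + Q.length = (y::s).length := by
      rw [← List.length_append, ← htPQ]
    simp only [List.length_cons, List.length_append, List.length_reverse] at hle hlenP
    omega


end AK

section AK2

variable {V : Type*} [Fintype V] [DecidableEq V] {G : SimpleGraph V}

private lemma edist_le_one_of_adj {a b : V} (h : G.Adj a b) : G.edist a b ≤ 1 :=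
  le_of_eq (SimpleGraph.edist_eq_one_iff_adj.2 h)

private lemma spanning_of_max {C : List V} (hC : IsCyc G C)
    (hmax : ∀ l, IsCyc G l → l.length ≤ C.length)
    (hconn : G.Connected)
    (hdeg2 : ∀ a : V, (Mball G 3 a).ncard ≤ 2 * deg G a) :
    ∀ v : V, v ∈ C := by
  classical
  by_contra hw
  push_neg at hw
  obtain ⟨w, hwC⟩ := hw
  -- there is an edge leaving the cycle
  have hex : ¬ ∀ a ∈ C, ∀ b, G.Adj a b → b ∈ C := by
    intro hcl
    exact hwC (mem_of_closed hcl (List.head_mem hC.ne_nil) hconn w)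
  push_neg at hex
  obtain ⟨a, haC, b, hab, hbC⟩ := hex
  rename' b => x
  -- rotate the cycle so that `a` is the head
  have hklt : C.idxOf a < C.length := List.idxOf_lt_length_iff.2 haC
  have hcyc' : IsCyc G (C.rotate (C.idxOf a)) := hC.rotate _
  have hlen' : (C.rotate (C.idxOf a)).length = C.length := List.length_rotate C _
  have hmax' : ∀ l, IsCyc G l → l.length ≤ (C.rotate (C.idxOf a)).length :=
    fun l hl => hlen' ▸ hmax l hl
  have hhead : (C.rotate (C.idxOf a)).head hcyc'.ne_nil = a := by
    have h0 : 0 < (C.rotate (C.idxOf a)).length := List.length_pos_iff.2 hcyc'.ne_nil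
    have h1 := List.get_rotate C (C.idxOf a) ⟨0, h0⟩
    rw [List.get_mk_zero] at h1
    rw [h1]
    simp only [List.get_eq_getElem, Nat.zero_add, Nat.mod_eq_of_lt hklt]
    exact List.getElem_idxOf hklt
  have hbC' : x ∉ C.rotate (C.idxOf a) := fun h => hbC (List.mem_rotate.1 h)
  -- destructure the rotated cycle
  obtain ⟨u, t1, he1⟩ := List.exists_cons_of_ne_nil hcyc'.ne_nil
  have hlen3 : 3 ≤ (C.rotate (C.idxOf a)).length := hcyc'.2.1
  obtain ⟨y, s, he2⟩ : ∃ y s, t1 = y :: s := by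
    rcases t1 with _ | ⟨y, s⟩
    · rw [he1] at hlen3; simp at hlen3
    · exact ⟨y, s, rfl⟩
  subst he2
  rw [he1] at hcyc' hmax' hbC'
  have hu : u = a := by
    have := hhead
    simp only [he1, List.head_cons] at this
    exact this
  subst hu
  clear hhead he1 hlen' hlen3 hklt haC hwC
  set C' := u :: y :: s with hC'def
  have hxC : x ∉ C' := hbC'
  have hux : G.Adj u x := hab
  -- basic memberships and edges
  have huC : u ∈ C' := by simp [hC'def]
  have hyC : y ∈ C' := by simp [hC'def]
  have huy : G.Adj u y := (List.isChain_cons_cons.1 hcyc'.chain').1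
  have hAdjNext : ∀ v (hv : v ∈ C'), G.Adj v (C'.next v hv) := fun v hv => hcyc'.adj_next hv
  have NoCross : ∀ v (hv : v ∈ C'), G.Adj x v → G.Adj y (C'.next v hv) → False :=
    fun v hv h1 h2 => no_cross hcyc' hmax' hxC hux hv h1 h2
  have NoOut : ∀ z, z ∉ C' → G.Adj x z → G.Adj z y → False := by
    intro z hz h1 h2
    have hnew := isCyc_insert hcyc' (List.cons_ne_nil y s) hxC hz h1.ne hux h1
      (by rw [List.head_cons]; exact h2)
    have := hmax' _ hnew
    rw [hC'def] at this
    simp only [List.length_cons] at this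
    omega
  have hxy : ¬ G.Adj x y := by
    intro h
    exact NoCross y hyC h (hAdjNext y hyC)
  -- the two injections
  set φ : V → V := fun v => if h : v ∈ C' then C'.next v h else v with hφ
  set ψ : V → V := fun v => if h : v ∈ C' then C'.prev v h else v with hψ
  have hφinj : Function.Injective φ := by
    intro p q hpq
    simp only [hφ] at hpq
    by_cases hp : p ∈ C' <;> by_cases hq : q ∈ C' <;> simp only [hp, hq, dif_pos, dif_neg,
      not_false_iff] at hpq
    · exact next_inj hcyc'.1 hp hq hpq
    · exact absurd (hpq ▸ List.next_mem C' p hp) hq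
    · exact absurd (hpq.symm ▸ List.next_mem C' q hq) hp
    · exact hpq
  have hψinj : Function.Injective ψ := by
    intro p q hpq
    simp only [hψ] at hpq
    by_cases hp : p ∈ C' <;> by_cases hq : q ∈ C' <;> simp only [hp, hq, dif_pos, dif_neg,
      not_false_iff] at hpq
    · exact prev_inj hcyc'.1 hp hq hpq
    · exact absurd (hpq ▸ List.prev_mem C' p hp) hq
    · exact absurd (hpq.symm ▸ List.prev_mem C' q hq) hp
    · exact hpq
  -- distances
  have hedist_xu : G.edist x u ≤ 1 := edist_le_one_of_adj hux.symm
  have hedist_uy : G.edist u y ≤ 1 := edist_le_one_of_adj huy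
  have hedist_xy : G.edist x y ≤ 2 := by
    calc G.edist x y ≤ G.edist x u + G.edist u y := SimpleGraph.edist_triangle
    _ ≤ 1 + 1 := add_le_add hedist_xu hedist_uy
    _ = 2 := by norm_num
  -- first inequality, at x
  have hsub1 : (φ '' G.neighborSet x) ∪ (G.neighborSet y ∪ {x}) ⊆ Mball G 3 x := by
    rintro p (⟨v, hvNx, rfl⟩ | hp | hp)
    · have hadjxv : G.Adj x v := hvNx
      by_cases hvc : v ∈ C'
      · show G.edist x (φ v) ≤ 3
        simp only [hφ, dif_pos hvc]
        calc G.edist x (C'.next v hvc) ≤ G.edist x v + G.edist v (C'.next v hvc) :=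
            SimpleGraph.edist_triangle
        _ ≤ 1 + 1 := add_le_add (edist_le_one_of_adj hadjxv)
            (edist_le_one_of_adj (hAdjNext v hvc))
        _ ≤ 3 := by norm_num
      · show G.edist x (φ v) ≤ 3
        simp only [hφ, dif_neg hvc]
        exact le_trans (edist_le_one_of_adj hadjxv) (by norm_num)
    · have hadjyp : G.Adj y p := hp
      show G.edist x p ≤ 3
      calc G.edist x p ≤ G.edist x y + G.edist y p := SimpleGraph.edist_triangle
      _ ≤ 2 + 1 := add_le_add hedist_xy (edist_le_one_of_adj hadjyp)
      _ = 3 := by norm_num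
    · rw [Set.mem_singleton_iff] at hp
      rw [hp]
      show G.edist x x ≤ 3
      simp [SimpleGraph.edist_self]
  have hd1 : Disjoint (φ '' G.neighborSet x) (G.neighborSet y ∪ {x}) := by
    rw [Set.disjoint_left]
    rintro p ⟨v, hvNx, rfl⟩ (hp | hp)
    · have hadjxv : G.Adj x v := hvNx
      by_cases hvc : v ∈ C'
      · simp only [hφ, dif_pos hvc] at hp
        exact NoCross v hvc hadjxv hp
      · simp only [hφ, dif_neg hvc] at hp
        exact NoOut v hvc hadjxv (SimpleGraph.Adj.symm hp)
    · have hadjxv : G.Adj x v := hvNx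
      rw [Set.mem_singleton_iff] at hp
      by_cases hvc : v ∈ C'
      · simp only [hφ, dif_pos hvc] at hp
        exact hxC (hp ▸ List.next_mem C' v hvc)
      · simp only [hφ, dif_neg hvc] at hp
        exact hadjxv.ne hp.symm
  have hdyx : Disjoint (G.neighborSet y) ({x} : Set V) := by
    rw [Set.disjoint_singleton_right]
    intro hmem
    exact hxy (SimpleGraph.Adj.symm hmem)
  have hcard1 : deg G x + (deg G y + 1) ≤ 2 * deg G x := by
    have huc : ((φ '' G.neighborSet x) ∪ (G.neighborSet y ∪ {x})).ncard
        = deg G x + (deg G y + 1) := by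
      rw [Set.ncard_union_eq hd1 (Set.toFinite _) (Set.toFinite _),
        Set.ncard_union_eq hdyx (Set.toFinite _) (Set.toFinite _),
        Set.ncard_image_of_injOn hφinj.injOn, Set.ncard_singleton]
      rfl
    calc deg G x + (deg G y + 1)
        = ((φ '' G.neighborSet x) ∪ (G.neighborSet y ∪ {x})).ncard := huc.symm
      _ ≤ (Mball G 3 x).ncard := Set.ncard_le_ncard hsub1 (Set.toFinite _)
      _ ≤ 2 * deg G x := hdeg2 x
  -- second inequality, at y
  have hedist_yx : G.edist y x ≤ 2 := by rw [SimpleGraph.edist_comm]; exact hedist_xy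
  have hsub2 : (ψ '' G.neighborSet y) ∪ (G.neighborSet x ∪ {x}) ⊆ Mball G 3 y := by
    rintro p (⟨v, hvNy, rfl⟩ | hp | hp)
    · have hadjyv : G.Adj y v := hvNy
      by_cases hvc : v ∈ C'
      · show G.edist y (ψ v) ≤ 3
        simp only [hψ, dif_pos hvc]
        calc G.edist y (C'.prev v hvc) ≤ G.edist y v + G.edist v (C'.prev v hvc) :=
            SimpleGraph.edist_triangle
        _ ≤ 1 + 1 := add_le_add (edist_le_one_of_adj hadjyv)
            (edist_le_one_of_adj (hcyc'.adj_prev hvc).symm)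
        _ ≤ 3 := by norm_num
      · show G.edist y (ψ v) ≤ 3
        simp only [hψ, dif_neg hvc]
        exact le_trans (edist_le_one_of_adj hadjyv) (by norm_num)
    · have hadjxp : G.Adj x p := hp
      show G.edist y p ≤ 3
      calc G.edist y p ≤ G.edist y x + G.edist x p := SimpleGraph.edist_triangle
      _ ≤ 2 + 1 := add_le_add hedist_yx (edist_le_one_of_adj hadjxp)
      _ = 3 := by norm_num
    · rw [Set.mem_singleton_iff] at hp
      rw [hp]
      show G.edist y x ≤ 3
      exact le_trans hedist_yx (by norm_num)
  have hd2 : Disjoint (ψ '' G.neighborSet y) (G.neighborSet x ∪ {x}) := by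
    rw [Set.disjoint_left]
    rintro p ⟨v, hvNy, rfl⟩ hmem
    have hadjyv : G.Adj y v := hvNy
    rcases hmem with hp | hp
    · by_cases hvc : v ∈ C'
      · simp only [hψ, dif_pos hvc] at hp
        have hnext : C'.next (C'.prev v hvc) (List.prev_mem C' v hvc) = v :=
          List.next_prev C' hcyc'.1 v hvc
        refine NoCross (C'.prev v hvc) (List.prev_mem C' v hvc) hp ?_
        rw [hnext]
        exact hadjyv
      · simp only [hψ, dif_neg hvc] at hp
        exact NoOut v hvc hp hadjyv.symm
    · rw [Set.mem_singleton_iff] at hp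
      by_cases hvc : v ∈ C'
      · simp only [hψ, dif_pos hvc] at hp
        exact hxC (hp ▸ List.prev_mem C' v hvc)
      · simp only [hψ, dif_neg hvc] at hp
        exact hxy (hp ▸ hadjyv.symm)
  have hdxx : Disjoint (G.neighborSet x) ({x} : Set V) := by
    rw [Set.disjoint_singleton_right]
    intro hmem
    exact G.irrefl hmem
  have hcard2 : deg G y + (deg G x + 1) ≤ 2 * deg G y := by
    have huc : ((ψ '' G.neighborSet y) ∪ (G.neighborSet x ∪ {x})).ncard
        = deg G y + (deg G x + 1) := by
      rw [Set.ncard_union_eq hd2 (Set.toFinite _) (Set.toFinite _),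
        Set.ncard_union_eq hdxx (Set.toFinite _) (Set.toFinite _),
        Set.ncard_image_of_injOn hψinj.injOn, Set.ncard_singleton]
      rfl
    calc deg G y + (deg G x + 1)
        = ((ψ '' G.neighborSet y) ∪ (G.neighborSet x ∪ {x})).ncard := huc.symm
      _ ≤ (Mball G 3 y).ncard := Set.ncard_le_ncard hsub2 (Set.toFinite _)
      _ ≤ 2 * deg G y := hdeg2 y
  omega

end AK2

section AK3

variable {V : Type*} [Fintype V] [DecidableEq V] {G : SimpleGraph V}

private lemma walk_of_chain :
    ∀ (l : List V) (a : V), List.Chain G.Adj a l →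
      ∃ (b : V) (p : G.Walk a b), p.support = a :: l
  | [], a, _ => ⟨a, SimpleGraph.Walk.nil, rfl⟩
  | c :: l, a, h => by
    obtain ⟨b, p, hp⟩ := walk_of_chain l c (List.chain_cons.1 h).2
    exact ⟨b, SimpleGraph.Walk.cons (List.chain_cons.1 h).1 p,
      by rw [SimpleGraph.Walk.support_cons, hp]⟩

private lemma no_return_edge {a b : V} (p : G.Walk a b) (hnd : p.support.Nodup)
    (hlen : 3 ≤ p.support.length) : s(b, a) ∉ p.edges := by
  cases p with
  | nil => simp
  | @cons _ w _ h q =>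
    intro he
    rw [SimpleGraph.Walk.edges_cons, List.mem_cons] at he
    rw [SimpleGraph.Walk.support_cons] at hnd hlen
    have hnd' : q.support.Nodup := (List.nodup_cons.1 hnd).2
    have hanq : a ∉ q.support := (List.nodup_cons.1 hnd).1
    rcases he with he | he
    · rw [Sym2.eq_iff] at he
      rcases he with ⟨hba, -⟩ | ⟨hbw, -⟩
      · subst hba
        exact hanq q.end_mem_support
      · subst hbw
        have hpath : q.IsPath := SimpleGraph.Walk.IsPath.mk' hnd'
        have hqnil : q = SimpleGraph.Walk.nil :=
          Subtype.ext_iff.1 (SimpleGraph.Path.loop_eq (⟨q, hpath⟩ : G.Path b b))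
        rw [hqnil] at hlen
        simp at hlen
    · exact hanq (SimpleGraph.Walk.snd_mem_support_of_mem_edges q he)

private lemma hamiltonian_of_spanning_cyc {C : List V} (hC : IsCyc G C)
    (hspan : ∀ v : V, v ∈ C) (hcard : 3 ≤ Fintype.card V) : G.IsHamiltonian := by
  intro _
  obtain ⟨y0, t0, hCeq⟩ := List.exists_cons_of_ne_nil hC.ne_nil
  have hch : List.Chain G.Adj y0 t0 := by
    have := hC.chain'
    rw [hCeq] at this
    exact this
  obtain ⟨b, p, hp⟩ := walk_of_chain t0 y0 hch
  have hbl : (y0 :: t0).getLast (by simp) = b := by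
    have h1 := p.getLast_support
    simp only [hp] at h1
    exact h1
  have hwrapb : G.Adj b y0 := by
    have hw := hC.wrap hC.ne_nil
    simp only [hCeq, List.head_cons] at hw
    rwa [hbl] at hw
  have hsupnd : p.support.Nodup := by
    rw [hp, ← hCeq]
    exact hC.1
  have hsuplen : 3 ≤ p.support.length := by
    rw [hp, ← hCeq]
    exact hC.2.1
  have hcyc : (SimpleGraph.Walk.cons hwrapb p).IsCycle := by
    rw [SimpleGraph.Walk.cons_isCycle_iff]
    exact ⟨SimpleGraph.Walk.IsPath.mk' hsupnd, no_return_edge p hsupnd hsuplen⟩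
  refine ⟨b, SimpleGraph.Walk.cons hwrapb p, ?_⟩
  rw [SimpleGraph.Walk.isHamiltonianCycle_iff_isCycle_and_support_count_tail_eq_one]
  refine ⟨hcyc, fun z => ?_⟩
  rw [SimpleGraph.Walk.support_cons, List.tail_cons, hp, ← hCeq]
  exact List.count_eq_one_of_mem hC.1 (hspan z)

end AK3

/-- Let `G` be a connected finite graph on at least three vertices such that
`d(u) ≥ (1/2)|M_3(u)|` for every vertex `u`. Then `G` is Hamiltonian. -/
theorem stmt_17 {V : Type*} [Fintype V] [DecidableEq V] (G : SimpleGraph V)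
    (h3 : 3 ≤ Fintype.card V) (hconn : G.Connected)
    (hdeg : ∀ u : V, (1 / 2 : ℝ) * ((Mball G 3 u).ncard : ℝ) ≤ (deg G u : ℝ)) :
    G.IsHamiltonian := by
  classical
  have hdeg2 : ∀ u : V, (Mball G 3 u).ncard ≤ 2 * deg G u := by
    intro u
    have h1 := hdeg u
    have h2 : ((Mball G 3 u).ncard : ℝ) ≤ 2 * (deg G u : ℝ) := by linarith
    exact_mod_cast h2
  -- minimum degree at least one
  have hnbr : ∀ u : V, ∃ v, G.Adj u v := by
    intro u
    obtain ⟨v, hvu⟩ := Fintype.exists_ne_of_one_lt_card (by omega) u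
    obtain ⟨p⟩ := hconn.preconnected u v
    cases p with
    | nil => exact absurd rfl hvu
    | cons h q => exact ⟨_, h⟩
  have hdeg1 : ∀ u : V, 1 ≤ deg G u := by
    intro u
    obtain ⟨v, huv⟩ := hnbr u
    exact (Set.ncard_pos (Set.toFinite _)).2 ⟨v, huv⟩
  -- minimum degree at least two
  have hmin : ∀ u : V, 2 ≤ deg G u := by
    intro u
    by_contra hlt
    push_neg at hlt
    have h1 : deg G u = 1 := le_antisymm (by omega) (hdeg1 u)
    obtain ⟨v, hv⟩ := Set.ncard_eq_one.1 h1
    have huv : G.Adj u v := by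
      have : v ∈ G.neighborSet u := by rw [hv]; exact rfl
      exact this
    have hsub : ({v} : Set V) ∪ G.neighborSet v ⊆ Mball G 3 u := by
      rintro p (hp | hp)
      · rw [Set.mem_singleton_iff] at hp
        rw [hp]
        show G.edist u v ≤ 3
        exact le_trans (edist_le_one_of_adj huv) (by norm_num)
      · have hadj : G.Adj v p := hp
        show G.edist u p ≤ 3
        calc G.edist u p ≤ G.edist u v + G.edist v p := SimpleGraph.edist_triangle
        _ ≤ 1 + 1 := add_le_add (edist_le_one_of_adj huv) (edist_le_one_of_adj hadj)
        _ ≤ 3 := by norm_num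
    have hdisj : Disjoint ({v} : Set V) (G.neighborSet v) := by
      rw [Set.disjoint_singleton_left]
      exact G.irrefl
    have hcard : 1 + deg G v ≤ (Mball G 3 u).ncard := by
      have := Set.ncard_le_ncard hsub (Set.toFinite _)
      rwa [Set.ncard_union_eq hdisj (Set.toFinite _) (Set.toFinite _),
        Set.ncard_singleton] at this
    have hvle : deg G v ≤ 1 := by
      have := hdeg2 u
      omega
    have hvdeg : deg G v = 1 := le_antisymm hvle (hdeg1 v)
    obtain ⟨w', hw'⟩ := Set.ncard_eq_one.1 hvdeg
    have hNv : G.neighborSet v = {u} := by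
      have hu : u ∈ G.neighborSet v := huv.symm
      rw [hw'] at hu ⊢
      rw [Set.mem_singleton_iff] at hu
      rw [hu]
    have hS : ∀ p ∈ ({u, v} : Set V), ∀ q, G.Adj p q → q ∈ ({u, v} : Set V) := by
      rintro p (rfl | rfl) q hq
      · have : q ∈ G.neighborSet p := hq
        rw [hv, Set.mem_singleton_iff] at this
        right
        exact this
      · have : q ∈ G.neighborSet p := hq
        rw [hNv, Set.mem_singleton_iff] at this
        left
        exact this
    have hall : ∀ z : V, z ∈ ({u, v} : Set V) :=
      fun z => mem_of_closed hS (Set.mem_insert u {v}) hconn z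
    have hle : (Set.univ : Set V).ncard ≤ ({u, v} : Set V).ncard :=
      Set.ncard_le_ncard (fun z _ => hall z) (Set.toFinite _)
    rw [Set.ncard_univ, Nat.card_eq_fintype_card] at hle
    have h2 : ({u, v} : Set V).ncard ≤ 2 := by
      refine le_trans (Set.ncard_insert_le _ _) ?_
      rw [Set.ncard_singleton]
    omega
  -- G has a cycle
  letI : DecidableRel G.Adj := Classical.decRel _
  have hdegeq : ∀ u : V, G.degree u = deg G u := by
    intro u
    rw [deg, Set.ncard_eq_toFinset_card', SimpleGraph.degree, SimpleGraph.neighborFinset_def]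
  have hnac : ¬ G.IsAcyclic := by
    intro hac
    have htree : G.IsTree := ⟨hconn, hac⟩
    have hedge := htree.card_edgeFinset
    have hsum := G.sum_degrees_eq_twice_card_edges
    have hlow : Fintype.card V * 2 ≤ ∑ v : V, G.degree v := by
      have := Finset.card_nsmul_le_sum Finset.univ (fun v => G.degree v) 2
        (fun x _ => by show 2 ≤ G.degree x; rw [hdegeq]; exact hmin x)
      simpa [smul_eq_mul] using this
    rw [hsum] at hlow
    omega
  simp only [SimpleGraph.IsAcyclic, not_forall, not_not] at hnac
  obtain ⟨vtx, c, hcyc⟩ := hnac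
  -- extract a cycle list
  have hexcyc : ∃ l : List V, IsCyc G l := by
    cases c with
    | nil => exact absurd (hcyc.three_le_length) (by simp)
    | @cons _ w _ h q =>
      refine ⟨q.support, isCyc_of_chain ?_ ?_ q.isChain_adj_support ?_⟩
      · have := hcyc.support_nodup
        rwa [SimpleGraph.Walk.support_cons, List.tail_cons] at this
      · have h3l := hcyc.three_le_length
        rw [SimpleGraph.Walk.length_cons] at h3l
        rw [SimpleGraph.Walk.length_support]
        omega
      · intro hne
        have hgl : q.support.getLast hne = vtx := q.getLast_support
        have hhd : q.support.head hne = w := q.head_support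
        rw [hgl, hhd]
        exact h
  obtain ⟨C₀, hC₀⟩ := hexcyc
  -- choose a longest cycle
  have hSne : Set.Nonempty {n | ∃ l : List V, IsCyc G l ∧ l.length = n} := ⟨_, C₀, hC₀, rfl⟩
  have hSbdd : BddAbove {n | ∃ l : List V, IsCyc G l ∧ l.length = n} := by
    refine ⟨Fintype.card V, ?_⟩
    rintro n ⟨l, hl, rfl⟩
    exact hl.1.length_le_card
  obtain ⟨C, hCc, hClen⟩ := Nat.sSup_mem hSne hSbdd
  have hmax : ∀ l, IsCyc G l → l.length ≤ C.length := by
    intro l hl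
    rw [hClen]
    exact le_csSup hSbdd ⟨l, hl, rfl⟩
  have hspan := spanning_of_max hCc hmax hconn hdeg2
  exact hamiltonian_of_spanning_cyc hCc hspan h3
end
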